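/- arXiv:1703.04120 — 5 statements merged into one kernel-verified Lean document; each statement's English description precedes it below -/
import Mathlib

section
/- For any directed multigraph G with n vertices, the polynomial χ_G^{≥} satisfies: χ_G^{≥}(-1) = (-1)^{β₀(G)} if G is totally cyclic, and χ_G^{≥}(-1) = 0 otherwise, where β₀(G) is the number of connected components of G. -/
open Finset

/-- Edge `i` of `G` lies on a directed cycle. -/
def EdgeOnCycle (n k : ℕ) (G : Fin k → Fin n × Fin n) (i : Fin k) : Prop :=
  ∃ m : ℕ, 0 < m ∧ ∃ c : ZMod m → Fin k,
    (∀ j : ZMod m, (G (c j)).2 = (G (c (j + 1))).1) ∧ ∃ j : ZMod m, c j = i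

/-- `G` is totally cyclic: every edge lies on a directed cycle. -/
def TotCyclic (n k : ℕ) (G : Fin k → Fin n × Fin n) : Prop :=
  ∀ i : Fin k, EdgeOnCycle n k G i

/-- Number of connected components of the underlying undirected graph. -/
noncomputable def beta0 (n k : ℕ) (G : Fin k → Fin n × Fin n) : ℕ :=
  Nat.card (SimpleGraph.fromRel fun a b => ∃ i, G i = (a, b) ∨ G i = (b, a)).ConnectedComponent

namespace S7

variable {n k : ℕ} (G : Fin k → Fin n × Fin n)

def Valid {α : Type*} [Preorder α] (f : Fin n → α) : Prop :=
  ∀ i, f (G i).2 ≤ f (G i).1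

instance {α : Type*} [Preorder α] [DecidableRel ((· ≤ ·) : α → α → Prop)] (f : Fin n → α) :
    Decidable (Valid G f) :=
  inferInstanceAs (Decidable (∀ i, f (G i).2 ≤ f (G i).1))

def Step (a b : Fin n) : Prop := ∃ i, G i = (a, b)

def Reach : Fin n → Fin n → Prop := Relation.ReflTransGen (Step G)

lemma Valid.le_of_reach {α : Type*} [Preorder α] {f : Fin n → α} (hf : Valid G f)
    {a b : Fin n} (h : Reach G a b) : f b ≤ f a := by
  induction h with
  | refl => exact le_refl _
  | tail hab step ih =>
    obtain ⟨i, hi⟩ := step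
    have h2 := hf i
    rw [hi] at h2
    exact le_trans h2 ih

/-- rank of `iso m` inside `t` is `m` -/
lemma rank_card {α : Type*} [LinearOrder α] {t : Finset α} {j : ℕ} (pf : t.card = j) (m : Fin j) :
    #{x ∈ t | x < (t.orderIsoOfFin pf m : α)} = (m : ℕ) := by
  rw [← Finset.card_range (m : ℕ)]
  apply Finset.card_bij'
    (i := fun x hx => (((t.orderIsoOfFin pf).symm ⟨x, (Finset.mem_filter.1 hx).1⟩ : Fin j) : ℕ))
    (j := fun m' hm' => (t.orderIsoOfFin pf ⟨m', lt_trans (Finset.mem_range.1 hm') m.2⟩ : α))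
  case hi =>
    intro x hx
    rw [Finset.mem_range]
    have hlt := (Finset.mem_filter.1 hx).2
    have h2 : (t.orderIsoOfFin pf).symm ⟨x, (Finset.mem_filter.1 hx).1⟩ < m := by
      rw [← (t.orderIsoOfFin pf).lt_iff_lt, OrderIso.apply_symm_apply]
      exact Subtype.mk_lt_mk.2 hlt
    exact_mod_cast h2
  case hj =>
    intro m' hm'
    rw [Finset.mem_filter]
    refine ⟨(t.orderIsoOfFin pf _).2, ?_⟩
    have h2 : (⟨m', lt_trans (Finset.mem_range.1 hm') m.2⟩ : Fin j) < m := Finset.mem_range.1 hm'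
    exact_mod_cast (t.orderIsoOfFin pf).lt_iff_lt.2 h2
  case left_inv => intro x hx; simp
  case right_inv =>
    intro m' hm'
    rw [Subtype.coe_eta, OrderIso.symm_apply_apply]

def nu (q : ℕ) (f : Fin n → Fin q) (y : Fin n) : ℕ := #{x ∈ univ.image f | x < f y}

variable {q : ℕ} {f : Fin n → Fin q}

lemma nu_mono {y z : Fin n} (h : f y ≤ f z) : nu q f y ≤ nu q f z :=
  Finset.card_le_card (Finset.monotone_filter_right _ (fun x _ hx => lt_of_lt_of_le hx h))

lemma nu_strict {y z : Fin n} (h : f y < f z) : nu q f y < nu q f z := by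
  apply Finset.card_lt_card
  rw [Finset.ssubset_def]
  constructor
  · exact Finset.monotone_filter_right _ (fun x _ hx => lt_trans hx h)
  · intro hsub
    have h1 : f y ∈ {x ∈ univ.image f | x < f z} :=
      Finset.mem_filter.2 ⟨Finset.mem_image_of_mem f (mem_univ y), h⟩
    have h2 := hsub h1
    simp at h2

lemma nu_le_iff {y z : Fin n} : nu q f y ≤ nu q f z ↔ f y ≤ f z := by
  constructor
  · intro h
    by_contra hc
    push_neg at hc
    exact absurd h (not_le.2 (nu_strict hc))
  · exact nu_mono

lemma nu_lt_cardimage (y : Fin n) : nu q f y < (univ.image f).card := by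
  apply Finset.card_lt_card
  rw [Finset.ssubset_def]
  constructor
  · exact Finset.filter_subset _ _
  · intro hsub
    have h1 := hsub (Finset.mem_image_of_mem f (mem_univ y))
    simp at h1

lemma cardimage_le : (univ.image f).card ≤ n := by
  calc (univ.image f).card ≤ (univ : Finset (Fin n)).card := Finset.card_image_le
  _ = n := by simp

lemma image_nu : univ.image (nu q f) = range ((univ.image f).card) := by
  ext m
  simp only [Finset.mem_image, Finset.mem_range]
  constructor
  · rintro ⟨y, -, rfl⟩
    exact nu_lt_cardimage y
  · intro hm
    have hx : ((univ.image f).orderIsoOfFin rfl ⟨m, hm⟩ : Fin q) ∈ univ.image f :=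
      ((univ.image f).orderIsoOfFin rfl ⟨m, hm⟩).2
    obtain ⟨y, -, hy⟩ := Finset.mem_image.1 hx
    refine ⟨y, mem_univ y, ?_⟩
    have h1 := rank_card (t := univ.image f) rfl ⟨m, hm⟩
    unfold nu
    rw [hy]
    exact h1

lemma nu_valid (hf : Valid G f) : Valid G (nu q f) := fun i => nu_mono (hf i)

lemma nu_recover (y : Fin n) :
    (((univ.image f).orderIsoOfFin rfl ⟨nu q f y, nu_lt_cardimage y⟩ : Fin q)) = f y := by
  have hmem : f y ∈ univ.image f := Finset.mem_image_of_mem f (mem_univ y)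
  have h1 := rank_card (t := univ.image f) rfl (((univ.image f).orderIsoOfFin rfl).symm ⟨f y, hmem⟩)
  rw [OrderIso.apply_symm_apply] at h1
  have h2 : nu q f y = ((((univ.image f).orderIsoOfFin rfl).symm ⟨f y, hmem⟩ : Fin _) : ℕ) := by
    unfold nu; exact h1
  have h3 : (⟨nu q f y, nu_lt_cardimage y⟩ : Fin (univ.image f).card)
      = ((univ.image f).orderIsoOfFin rfl).symm ⟨f y, hmem⟩ := by
    apply Fin.ext; exact h2
  rw [h3, OrderIso.apply_symm_apply]


lemma nu_recover'' {q : ℕ} {f : Fin n → Fin q} {j : ℕ} (pf : (univ.image f).card = j)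
    (y : Fin n) (hy : nu q f y < j) :
    (((univ.image f).orderIsoOfFin pf ⟨nu q f y, hy⟩ : Fin q)) = f y := by
  subst pf
  exact nu_recover y

/-- number of "blocks" of a map to ℕ -/
def jf (f : Fin n → ℕ) : ℕ := (univ.image f).card

/-- normalized valid maps -/
def BB : Finset (Fin n → ℕ) :=
  {g ∈ Fintype.piFinset (fun _ : Fin n => range (n+1)) |
    Valid G g ∧ univ.image g = range (jf g)}

def S (j : ℕ) : ℕ := #{g ∈ BB G | jf g = j}

lemma mem_BB_iff {g : Fin n → ℕ} :
    g ∈ BB G ↔ (Valid G g ∧ univ.image g = range (jf g)) := by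
  unfold BB
  rw [Finset.mem_filter]
  constructor
  · exact fun h => h.2
  · intro h
    refine ⟨?_, h⟩
    rw [Fintype.mem_piFinset]
    intro y
    rw [Finset.mem_range]
    have hy : g y ∈ univ.image g := Finset.mem_image_of_mem g (mem_univ y)
    rw [h.2, Finset.mem_range] at hy
    have : jf g ≤ n := by
      calc jf g = (univ.image g).card := rfl
      _ ≤ (univ : Finset (Fin n)).card := Finset.card_image_le
      _ = n := by simp
    omega

lemma nu_mem_BB {q : ℕ} {f : Fin n → Fin q} (hf : Valid G f) : nu q f ∈ BB G := by
  rw [mem_BB_iff]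
  refine ⟨nu_valid G hf, ?_⟩
  have h1 : jf (nu q f) = (univ.image f).card := by
    unfold jf; rw [image_nu, Finset.card_range]
  rw [h1, image_nu]


lemma fiber_card (q : ℕ) (h : Fin n → ℕ) (hh : h ∈ BB G) :
    #{f ∈ univ.filter (fun f : Fin n → Fin q => Valid G f) | nu q f = h} = q.choose (jf h) := by
  obtain ⟨hval, himg⟩ := (mem_BB_iff G).1 hh
  have hlt : ∀ y, h y < jf h := by
    intro y
    have : h y ∈ univ.image h := Finset.mem_image_of_mem h (mem_univ y)
    rw [himg, Finset.mem_range] at this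
    exact this
  have hcard : q.choose (jf h) = #(Finset.powersetCard (jf h) (univ : Finset (Fin q))) := by
    rw [Finset.card_powersetCard, Finset.card_univ, Fintype.card_fin]
  rw [hcard]
  -- facts about the fiber
  have hfib : ∀ f : Fin n → Fin q,
      f ∈ {f ∈ univ.filter (fun f : Fin n → Fin q => Valid G f) | nu q f = h}
      ↔ (Valid G f ∧ nu q f = h) := by
    intro f
    simp only [Finset.mem_filter, Finset.mem_univ, true_and]
  have hjfcard : ∀ f : Fin n → Fin q, nu q f = h → (univ.image f).card = jf h := by
    intro f hf
    have h1 : univ.image (nu q f) = range (jf h) := by rw [hf, himg]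
    rw [image_nu] at h1
    have := congrArg Finset.card h1
    simpa using this
  -- the backward map
  have hpft : ∀ t ∈ Finset.powersetCard (jf h) (univ : Finset (Fin q)), t.card = jf h :=
    fun t ht => (Finset.mem_powersetCard.1 ht).2
  apply Finset.card_bij' (i := fun f _ => univ.image f)
    (j := fun t ht => fun y => (t.orderIsoOfFin (hpft t ht) ⟨h y, hlt y⟩ : Fin q))
  case hi =>
    intro f hf
    rw [Finset.mem_powersetCard]
    exact ⟨Finset.subset_univ _, hjfcard f ((hfib f).1 hf).2⟩
  case hj =>
    intro t ht
    rw [hfib]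
    set e := t.orderIsoOfFin (hpft t ht) with he
    have hmono : ∀ y z : Fin n, (e ⟨h y, hlt y⟩ : Fin q) ≤ (e ⟨h z, hlt z⟩ : Fin q) ↔ h y ≤ h z := by
      intro y z
      rw [Subtype.coe_le_coe, e.le_iff_le, Fin.mk_le_mk]
    have himgt : univ.image (fun y => (e ⟨h y, hlt y⟩ : Fin q)) = t := by
      apply Finset.Subset.antisymm
      · intro x hx
        obtain ⟨y, -, hy⟩ := Finset.mem_image.1 hx
        rw [← hy]
        exact (e ⟨h y, hlt y⟩).2
      · intro x hx
        have hm : ((e.symm ⟨x, hx⟩ : Fin (jf h)) : ℕ) ∈ range (jf h) :=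
          Finset.mem_range.2 (e.symm ⟨x, hx⟩).2
        rw [← himg] at hm
        obtain ⟨y, -, hy⟩ := Finset.mem_image.1 hm
        apply Finset.mem_image.2
        refine ⟨y, mem_univ y, ?_⟩
        have : (⟨h y, hlt y⟩ : Fin (jf h)) = e.symm ⟨x, hx⟩ := Fin.ext hy
        rw [this, OrderIso.apply_symm_apply]
    constructor
    · intro i
      exact (hmono _ _).2 (hval i)
    · funext y
      unfold nu
      rw [himgt]
      have := rank_card (hpft t ht) ⟨h y, hlt y⟩
      exact this
  case left_inv =>
    intro f hf
    obtain ⟨hvf, hnf⟩ := (hfib f).1 hf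
    funext y
    subst hnf
    exact nu_recover'' (hjfcard f rfl) y (hlt y)
  case right_inv =>
    intro t ht
    -- same as himgt above
    set e := t.orderIsoOfFin (hpft t ht) with he
    apply Finset.Subset.antisymm
    · intro x hx
      obtain ⟨y, -, hy⟩ := Finset.mem_image.1 hx
      rw [← hy]
      exact (e ⟨h y, hlt y⟩).2
    · intro x hx
      have hm : ((e.symm ⟨x, hx⟩ : Fin (jf h)) : ℕ) ∈ range (jf h) :=
        Finset.mem_range.2 (e.symm ⟨x, hx⟩).2
      rw [← himg] at hm
      obtain ⟨y, -, hy⟩ := Finset.mem_image.1 hm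
      apply Finset.mem_image.2
      refine ⟨y, mem_univ y, ?_⟩
      have : (⟨h y, hlt y⟩ : Fin (jf h)) = e.symm ⟨x, hx⟩ := Fin.ext hy
      rw [this, OrderIso.apply_symm_apply]

lemma count_valid (q : ℕ) :
    #{f : Fin n → Fin q | Valid G f} = ∑ j ∈ range (n+1), S G j * q.choose j := by
  classical
  rw [Finset.card_eq_sum_card_fiberwise (f := fun f => nu q f) (t := BB G)
    (fun f hf => nu_mem_BB G (Finset.mem_filter.1 hf).2)]
  have h1 : ∀ h ∈ BB G,
      #{f ∈ univ.filter (fun f : Fin n → Fin q => Valid G f) | nu q f = h}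
        = q.choose (jf h) := fiber_card G q
  rw [Finset.sum_congr rfl h1]
  rw [← Finset.sum_fiberwise_of_maps_to (g := jf) (t := range (n+1))
    (fun g hg => by
      rw [Finset.mem_range]
      have h2 := (mem_BB_iff G |>.1 hg).2
      have : jf g ≤ n := by
        calc jf g = (univ.image g).card := rfl
        _ ≤ (univ : Finset (Fin n)).card := Finset.card_image_le
        _ = n := by simp
      omega)]
  apply Finset.sum_congr rfl
  intro j hj
  rw [Finset.sum_congr rfl (fun g hg => by rw [(Finset.mem_filter.1 hg).2]),
    Finset.sum_const, smul_eq_mul]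
  rfl

lemma descPochhammer_eval_neg_one (j : ℕ) :
    (descPochhammer ℚ j).eval (-1) = (-1)^j * (j.factorial : ℚ) := by
  induction j with
  | zero => simp
  | succ j ih =>
    rw [descPochhammer_succ_right, Polynomial.eval_mul]
    rw [Polynomial.eval_sub, Polynomial.eval_X, Polynomial.eval_natCast, ih]
    rw [pow_succ, Nat.factorial_succ]
    push_cast
    ring

noncomputable def Qpoly : Polynomial ℚ :=
  ∑ j ∈ range (n+1), Polynomial.C ((S G j : ℚ) / (j.factorial : ℚ)) * descPochhammer ℚ j

lemma Qpoly_eval_nat (q : ℕ) :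
    (Qpoly G).eval (q : ℚ) = ∑ j ∈ range (n+1), (S G j : ℚ) * q.choose j := by
  unfold Qpoly
  rw [Polynomial.eval_finset_sum]
  apply Finset.sum_congr rfl
  intro j hj
  rw [Polynomial.eval_mul, Polynomial.eval_C, descPochhammer_eval_eq_descFactorial,
    Nat.descFactorial_eq_factorial_mul_choose]
  have hfac : (j.factorial : ℚ) ≠ 0 := by
    exact_mod_cast j.factorial_ne_zero
  push_cast
  field_simp

lemma Qpoly_eval_neg_one :
    (Qpoly G).eval (-1) = ∑ j ∈ range (n+1), (-1 : ℚ)^j * S G j := by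
  unfold Qpoly
  rw [Polynomial.eval_finset_sum]
  apply Finset.sum_congr rfl
  intro j hj
  rw [Polynomial.eval_mul, Polynomial.eval_C, descPochhammer_eval_neg_one]
  have hfac : (j.factorial : ℚ) ≠ 0 := by
    exact_mod_cast j.factorial_ne_zero
  field_simp

lemma eq_of_eval_nat_eq {P Q : Polynomial ℚ}
    (h : ∀ q : ℕ, 0 < q → P.eval (q : ℚ) = Q.eval (q : ℚ)) : P = Q := by
  apply Polynomial.eq_of_infinite_eval_eq
  apply Set.infinite_of_injective_forall_mem (f := fun m : ℕ => ((m + 1 : ℕ) : ℚ))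
  case hi =>
    intro a b hab
    have : (a : ℚ) + 1 = (b : ℚ) + 1 := by push_cast at hab ⊢; exact hab
    exact_mod_cast add_right_cancel this
  case hf =>
    intro m
    exact h (m + 1) (Nat.succ_pos m)

lemma P_eval_neg_one (P : Polynomial ℚ)
    (hP : ∀ q : ℕ, 0 < q → P.eval (q : ℚ) = (#{f : Fin n → Fin q | Valid G f} : ℚ)) :
    P.eval (-1) = ∑ j ∈ range (n+1), (-1 : ℚ)^j * S G j := by
  have hPQ : P = Qpoly G := by
    apply eq_of_eval_nat_eq
    intro q hq
    rw [hP q hq, Qpoly_eval_nat, count_valid G]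
    push_cast
    ring
  rw [hPQ, Qpoly_eval_neg_one]

lemma cyc_edge_eq {α : Type*} [PartialOrder α] {f : Fin n → α} (hf : Valid G f) {i : Fin k}
    (hc : EdgeOnCycle n k G i) : f (G i).1 = f (G i).2 := by
  obtain ⟨m, hm, c, hc1, j0, hj0⟩ := hc
  set h : ZMod m → α := fun j => f (G (c j)).1 with hh
  have step : ∀ j, h (j + 1) ≤ h j := by
    intro j
    have h2 := hf (c j)
    calc h (j+1) = f (G (c (j+1))).1 := rfl
    _ = f (G (c j)).2 := by rw [hc1 j]
    _ ≤ f (G (c j)).1 := h2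
  have iter : ∀ (t : ℕ) (j : ZMod m), h (j + (t : ZMod m)) ≤ h j := by
    intro t
    induction t with
    | zero => intro j; simp
    | succ t ih =>
      intro j
      have h1 : j + ((t + 1 : ℕ) : ZMod m) = (j + (t : ZMod m)) + 1 := by push_cast; ring
      rw [h1]
      exact le_trans (step _) (ih j)
  have back : ∀ j, h j ≤ h (j + 1) := by
    intro j
    have h2 := iter (m - 1) (j + 1)
    have h3 : (j + 1) + ((m - 1 : ℕ) : ZMod m) = j := by
      have h4 : ((1 + (m - 1) : ℕ) : ZMod m) = 0 := by
        rw [show 1 + (m - 1) = m from by omega]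
        exact ZMod.natCast_self m
      have h5 : (j + 1) + ((m - 1 : ℕ) : ZMod m) = j + ((1 + (m - 1) : ℕ) : ZMod m) := by
        push_cast
        ring
      rw [h5, h4, add_zero]
    rw [h3] at h2
    exact h2
  have heq : h (j0 + 1) = h j0 := le_antisymm (step j0) (back j0)
  calc f (G i).1 = h j0 := by rw [← hj0]
  _ = h (j0 + 1) := heq.symm
  _ = f (G (c (j0+1))).1 := rfl
  _ = f (G (c j0)).2 := by rw [← hc1 j0]
  _ = f (G i).2 := by rw [hj0]

/-- underlying undirected graph -/
def H : SimpleGraph (Fin n) := SimpleGraph.fromRel fun a b => ∃ i, G i = (a, b) ∨ G i = (b, a)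

lemma valid_iff_const (htc : TotCyclic n k G) {α : Type*} [PartialOrder α] (f : Fin n → α) :
    Valid G f ↔ ∀ a b, (H G).Adj a b → f a = f b := by
  constructor
  · intro hf a b hab
    obtain ⟨hne, h1 | h1⟩ := hab <;> obtain ⟨i, h2 | h2⟩ := h1
    · have := cyc_edge_eq G hf (htc i); rw [h2] at this; exact this
    · have := cyc_edge_eq G hf (htc i); rw [h2] at this; exact this.symm
    · have := cyc_edge_eq G hf (htc i); rw [h2] at this; exact this.symm
    · have := cyc_edge_eq G hf (htc i); rw [h2] at this; exact this
  · intro hf i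
    by_cases he : (G i).1 = (G i).2
    · rw [he]
    · have hadj : (H G).Adj (G i).1 (G i).2 := by
        refine ⟨he, Or.inl ⟨i, Or.inl ?_⟩⟩
        exact Prod.ext rfl rfl
      rw [hf _ _ hadj]

lemma count_tc (htc : TotCyclic n k G) (q : ℕ) :
    #{f : Fin n → Fin q | Valid G f} = q ^ (Nat.card (H G).ConnectedComponent) := by
  classical
  have h1 : #{f : Fin n → Fin q | Valid G f} = Nat.card {f : Fin n → Fin q // Valid G f} := by
    rw [Nat.card_eq_fintype_card, Fintype.card_subtype]
  rw [h1]
  have e1 : {f : Fin n → Fin q // Valid G f}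
      ≃ {f : Fin n → Fin q // ∀ a b, (H G).Adj a b → f a = f b} :=
    Equiv.subtypeEquivRight (fun f => valid_iff_const G htc f)
  have walk_eq : ∀ (f : Fin n → Fin q), (∀ a b, (H G).Adj a b → f a = f b) →
      ∀ {v w : Fin n} (p : (H G).Walk v w), f v = f w := by
    intro f hf v w p
    induction p with
    | nil => rfl
    | cons hadj p ih => exact (hf _ _ hadj).trans ih
  have e2 : {f : Fin n → Fin q // ∀ a b, (H G).Adj a b → f a = f b}
      ≃ ((H G).ConnectedComponent → Fin q) := by
    refine ⟨fun f => SimpleGraph.ConnectedComponent.lift f.1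
        (fun v w p _ => walk_eq f.1 f.2 p),
      fun g => ⟨fun v => g ((H G).connectedComponentMk v),
        fun a b hab => congrArg g (SimpleGraph.ConnectedComponent.connectedComponentMk_eq_of_adj hab)⟩,
      ?_, ?_⟩
    · intro f; apply Subtype.ext; funext v; rfl
    · intro g
      funext c
      refine SimpleGraph.ConnectedComponent.ind (fun v => ?_) c
      rfl
  rw [Nat.card_congr (e1.trans e2), Nat.card_fun]
  simp

def EPath : Fin n → List (Fin k) → Fin n → Prop
  | a, [], b => a = b
  | a, e :: L, b => (G e).1 = a ∧ EPath (G e).2 L b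

lemma reach_epath {a b : Fin n} (h : Reach G a b) : ∃ L, EPath G a L b := by
  induction h using Relation.ReflTransGen.head_induction_on with
  | refl => exact ⟨[], rfl⟩
  | head step _ ih =>
    rename_i x c hcb
    obtain ⟨i, hi⟩ := step
    obtain ⟨L, hL⟩ := ih
    refine ⟨i :: L, ?_, ?_⟩
    · rw [hi]
    · rw [hi]; exact hL

lemma epath_first : ∀ {a b : Fin n} {L : List (Fin k)} (_ : EPath G a L b)
    (hL : 0 < L.length), (G (L[0]'hL)).1 = a := by
  intro a b L h hL
  cases L with
  | nil => simp at hL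
  | cons e L => exact h.1

lemma epath_last : ∀ {a b : Fin n} (L : List (Fin k)) (_ : EPath G a L b)
    (hL : 0 < L.length), (G (L[L.length - 1]'(by omega))).2 = b := by
  intro a b L
  induction L generalizing a with
  | nil => intro h hL; simp at hL
  | cons e L ih =>
    intro h hL
    cases L with
    | nil =>
      simpa using (show (G e).2 = b from h.2)
    | cons e' L' =>
      have h2 := ih h.2 (by simp)
      have h2' : (G ((e' :: L')[L'.length]'(by simp))).2 = b := h2
      show (G ((e :: e' :: L')[L'.length + 1]'(by simp))).2 = b
      rw [List.getElem_cons_succ]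
      exact h2'

lemma epath_mid : ∀ {a b : Fin n} (L : List (Fin k)) (_ : EPath G a L b) (t : ℕ)
    (ht : t + 1 < L.length), (G (L[t]'(by omega))).2 = (G (L[t+1]'ht)).1 := by
  intro a b L
  induction L generalizing a with
  | nil => intro h t ht; simp at ht
  | cons e L ih =>
    intro h t ht
    cases t with
    | zero =>
      rw [List.getElem_cons_zero, List.getElem_cons_succ]
      exact (epath_first G h.2 (by simp at ht; omega)).symm
    | succ t =>
      rw [List.getElem_cons_succ, List.getElem_cons_succ]
      exact ih h.2 t (by simp at ht; omega)

lemma cycle_of_closed_epath {a : Fin n} {M : List (Fin k)} (hM : EPath G a M a)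
    (h0 : 0 < M.length) : EdgeOnCycle n k G (M[0]'h0) := by
  set m := M.length with hm
  haveI : NeZero m := ⟨by omega⟩
  have hfl : (G (M[0]'h0)).1 = (G (M[m-1]'(by omega))).2 := by
    rw [epath_first G hM h0, epath_last G M hM h0]
  refine ⟨m, h0, fun j => M[ZMod.val j]'(ZMod.val_lt j), ?_, ⟨0, ?_⟩⟩
  · intro j
    show (G (M[ZMod.val j]'(ZMod.val_lt j))).2 = (G (M[ZMod.val (j+1)]'(ZMod.val_lt _))).1
    by_cases hm1 : m = 1
    · have hj : ∀ j' : ZMod m, ZMod.val j' = 0 := by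
        intro j'
        have := ZMod.val_lt j'
        omega
      rw [getElem_congr_idx (hj j), getElem_congr_idx (hj (j+1)), hfl, getElem_congr_idx (by omega : m - 1 = 0)]
    · have hm2 : 1 < m := by omega
      have hadd : ZMod.val (j + 1) = (ZMod.val j + 1) % m := by
        rw [ZMod.val_add, ZMod.val_one_eq_one_mod, Nat.mod_eq_of_lt hm2]
      by_cases hlt : ZMod.val j + 1 < m
      · have hv : ZMod.val (j + 1) = ZMod.val j + 1 := by
          rw [hadd, Nat.mod_eq_of_lt hlt]
        rw [getElem_congr_idx hv]
        exact epath_mid G M hM (ZMod.val j) hlt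
      · have hje : ZMod.val j = m - 1 := by
          have := ZMod.val_lt j
          omega
        have hv : ZMod.val (j + 1) = 0 := by
          rw [hadd, show ZMod.val j + 1 = m from by omega, Nat.mod_self]
        rw [getElem_congr_idx hv, getElem_congr_idx hje, ← hfl]
  · show M[ZMod.val (0 : ZMod m)]'(ZMod.val_lt _) = M[0]'h0
    exact getElem_congr_idx ZMod.val_zero

lemma not_reach_of_not_cyclic {i0 : Fin k} (h : ¬ EdgeOnCycle n k G i0) :
    ¬ Reach G ((G i0).2) ((G i0).1) := by
  intro hr
  obtain ⟨L, hL⟩ := reach_epath G hr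
  apply h
  have hM : EPath G (G i0).1 (i0 :: L) (G i0).1 := ⟨rfl, hL⟩
  have := cycle_of_closed_epath G hM (by simp)
  simpa using this

lemma exists_min (b0 : Fin n) : ∃ x, Reach G b0 x ∧ ∀ y, Reach G x y → Reach G y x := by
  classical
  obtain ⟨x, hx, hmin⟩ := Finset.exists_min_image
    (univ.filter fun x => Reach G b0 x)
    (fun x => #(univ.filter fun y => Reach G x y))
    ⟨b0, Finset.mem_filter.2 ⟨mem_univ _, Relation.ReflTransGen.refl⟩⟩
  refine ⟨x, (Finset.mem_filter.1 hx).2, ?_⟩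
  intro y hxy
  by_contra hyx
  have hy : y ∈ univ.filter fun z => Reach G b0 z :=
    Finset.mem_filter.2 ⟨mem_univ _, Relation.ReflTransGen.trans (Finset.mem_filter.1 hx).2 hxy⟩
  have hsub : (univ.filter fun z => Reach G y z) ⊂ (univ.filter fun z => Reach G x z) := by
    rw [Finset.ssubset_def]
    constructor
    · intro z hz
      exact Finset.mem_filter.2 ⟨mem_univ _,
        Relation.ReflTransGen.trans hxy (Finset.mem_filter.1 hz).2⟩
    · intro hcon
      have := (Finset.mem_filter.1 (hcon
        (Finset.mem_filter.2 ⟨mem_univ _, Relation.ReflTransGen.refl⟩))).2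
      exact hyx this
  have h1 := Finset.card_lt_card hsub
  have h2 := hmin y hy
  omega

open Classical in
noncomputable def spl (xstar : Fin n) (f : Fin n → ℕ) : Fin n → ℕ :=
  fun y => if f y < f xstar then f y else if Reach G xstar y then f xstar else f y + 1

def mrg (xstar : Fin n) (f : Fin n → ℕ) : Fin n → ℕ :=
  fun y => if f y ≤ f xstar then f y else f y - 1

section Invol

variable {xstar a0 : Fin n}
  (hmin : ∀ y, Reach G xstar y → Reach G y xstar)
  (hra : Reach G a0 xstar) (hna : ¬ Reach G xstar a0)
  {f : Fin n → ℕ} (hval : Valid G f) (himg : univ.image f = range (jf f))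

include hmin hval in
lemma reach_eq : ∀ y, Reach G xstar y → f y = f xstar :=
  fun y hy => le_antisymm (hval.le_of_reach G hy) (hval.le_of_reach G (hmin y hy))

include himg in
lemma mem_im {y : Fin n} : f y < jf f := by
  have : f y ∈ univ.image f := Finset.mem_image_of_mem f (mem_univ y)
  rw [himg, Finset.mem_range] at this
  exact this

include himg in
lemma im_wit {t : ℕ} (ht : t < jf f) : ∃ y, f y = t := by
  have : t ∈ univ.image f := by rw [himg]; exact Finset.mem_range.2 ht
  obtain ⟨y, -, hy⟩ := Finset.mem_image.1 this
  exact ⟨y, hy⟩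

-- value description of spl
lemma spl_reach {y : Fin n} (hmin' : ∀ y, Reach G xstar y → Reach G y xstar)
    (hval' : Valid G f) (hy : Reach G xstar y) : spl G xstar f y = f xstar := by
  have h1 : f y = f xstar := reach_eq G hmin' hval' y hy
  unfold spl
  rw [if_neg (by omega), if_pos hy]

lemma spl_lt {y : Fin n} (hy : f y < f xstar) : spl G xstar f y = f y := by
  unfold spl; rw [if_pos hy]

lemma spl_hi {y : Fin n} (hy1 : ¬ Reach G xstar y) (hy2 : ¬ (f y < f xstar)) :
    spl G xstar f y = f y + 1 := by
  unfold spl; rw [if_neg hy2, if_neg hy1]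

include hmin hra hna hval himg in
lemma caseA (hfull : ∀ y, f y = f xstar → Reach G xstar y) :
    Valid G (mrg xstar f) ∧ jf (mrg xstar f) = jf f - 1 ∧ mrg xstar f ∈ BB G
    ∧ f xstar + 2 ≤ jf f
    ∧ (¬ ∀ y, mrg xstar f y = mrg xstar f xstar → Reach G xstar y)
    ∧ spl G xstar (mrg xstar f) = f := by
  have hreq := reach_eq G hmin hval
  have hva0 : f xstar ≤ f a0 := hval.le_of_reach G hra
  have hJ : f xstar + 2 ≤ jf f := by
    have h1 : f a0 ≠ f xstar := fun h => hna (hfull a0 h)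
    have h2 : f a0 < jf f := mem_im himg
    omega
  have hvx : mrg xstar f xstar = f xstar := by unfold mrg; rw [if_pos (le_refl _)]
  have hmval : Valid G (mrg xstar f) := by
    intro i
    have := hval i
    unfold mrg
    split_ifs <;> omega
  have hmimg : univ.image (mrg xstar f) = range (jf f - 1) := by
    apply Finset.Subset.antisymm
    · intro t ht
      obtain ⟨y, -, hy⟩ := Finset.mem_image.1 ht
      have h1 : f y < jf f := mem_im himg
      rw [Finset.mem_range, ← hy]
      unfold mrg
      split_ifs <;> omega
    · intro t ht
      rw [Finset.mem_range] at ht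
      apply Finset.mem_image.2
      by_cases h1 : t ≤ f xstar
      · obtain ⟨y, hy⟩ := im_wit himg (show t < jf f by omega)
        refine ⟨y, mem_univ _, ?_⟩
        unfold mrg
        rw [hy, if_pos h1]
      · obtain ⟨y, hy⟩ := im_wit himg (show t + 1 < jf f by omega)
        refine ⟨y, mem_univ _, ?_⟩
        unfold mrg
        rw [hy, if_neg (by omega)]
        omega
  have hmjf : jf (mrg xstar f) = jf f - 1 := by
    unfold jf; rw [hmimg, Finset.card_range]; rfl
  have hmmem : mrg xstar f ∈ BB G := by
    rw [mem_BB_iff]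
    exact ⟨hmval, by rw [hmimg, hmjf]⟩
  have hnotfull : ¬ ∀ y, mrg xstar f y = mrg xstar f xstar → Reach G xstar y := by
    intro hcon
    obtain ⟨y1, hy1⟩ := im_wit himg (show f xstar + 1 < jf f by omega)
    have h2 : mrg xstar f y1 = f xstar := by
      unfold mrg; rw [hy1, if_neg (by omega)]
      omega
    have h3 := hcon y1 (by rw [h2, hvx])
    have := hreq y1 h3
    omega
  refine ⟨hmval, hmjf, hmmem, hJ, hnotfull, ?_⟩
  funext y
  by_cases hy : Reach G xstar y
  · rw [spl_reach G hmin hmval hy, hvx, hreq y hy]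
  · have h1 : f y ≠ f xstar := fun h => hy (hfull y h)
    by_cases h2 : f y < f xstar
    · have h3 : mrg xstar f y = f y := by unfold mrg; rw [if_pos (by omega)]
      rw [spl_lt G (y := y) (by rw [h3, hvx]; omega), h3]
    · have h3 : mrg xstar f y = f y - 1 := by unfold mrg; rw [if_neg (by omega)]
      rw [spl_hi G hy (by rw [h3, hvx]; omega), h3]
      omega

include hmin hval himg in
lemma caseB (hnfull : ¬ ∀ y, f y = f xstar → Reach G xstar y) :
    Valid G (spl G xstar f) ∧ jf (spl G xstar f) = jf f + 1 ∧ spl G xstar f ∈ BB G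
    ∧ (∀ y, spl G xstar f y = spl G xstar f xstar → Reach G xstar y)
    ∧ mrg xstar (spl G xstar f) = f := by
  push_neg at hnfull
  obtain ⟨y0, hy01, hy02⟩ := hnfull
  have hreq := reach_eq G hmin hval
  have hvx : spl G xstar f xstar = f xstar := spl_reach G hmin hval Relation.ReflTransGen.refl
  have hvJ : f xstar < jf f := mem_im himg
  have hsval : Valid G (spl G xstar f) := by
    intro i
    have h0 := hval i
    have hstep : Step G (G i).1 (G i).2 := ⟨i, Prod.mk.eta.symm⟩
    by_cases hru : Reach G xstar (G i).1
    · have hrw : Reach G xstar (G i).2 := Relation.ReflTransGen.tail hru hstep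
      rw [spl_reach G hmin hval hru, spl_reach G hmin hval hrw]
    · by_cases hrw : Reach G xstar (G i).2
      · have h1 := hreq _ hrw
        have h2 : ¬ ((G i).1 ∈ Set.univ) ∨ True := Or.inr trivial
        have h3 : ¬ (f (G i).1 < f xstar) := by omega
        rw [spl_reach G hmin hval hrw, spl_hi G hru h3]
        omega
      · by_cases h4 : f (G i).1 < f xstar
        · have h5 : f (G i).2 < f xstar := by omega
          rw [spl_lt G h4, spl_lt G h5]
          exact h0
        · rw [spl_hi G hru h4]
          by_cases h6 : f (G i).2 < f xstar
          · rw [spl_lt G h6]; omega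
          · rw [spl_hi G hrw h6]; omega
  have hsimg : univ.image (spl G xstar f) = range (jf f + 1) := by
    apply Finset.Subset.antisymm
    · intro t ht
      obtain ⟨y, -, hy⟩ := Finset.mem_image.1 ht
      have h1 : f y < jf f := mem_im himg
      rw [Finset.mem_range, ← hy]
      by_cases hry : Reach G xstar y
      · rw [spl_reach G hmin hval hry]; omega
      · by_cases h2 : f y < f xstar
        · rw [spl_lt G h2]; omega
        · rw [spl_hi G hry h2]; omega
    · intro t ht
      rw [Finset.mem_range] at ht
      apply Finset.mem_image.2
      rcases lt_trichotomy t (f xstar) with h1 | h1 | h1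
      · obtain ⟨y, hy⟩ := im_wit himg (show t < jf f by omega)
        exact ⟨y, mem_univ _, by rw [spl_lt G (by omega : f y < f xstar), hy]⟩
      · exact ⟨xstar, mem_univ _, by rw [hvx, h1]⟩
      · by_cases h2 : t = f xstar + 1
        · refine ⟨y0, mem_univ _, ?_⟩
          rw [spl_hi G hy02 (by omega)]
          omega
        · obtain ⟨y, hy⟩ := im_wit himg (show t - 1 < jf f by omega)
          have hry : ¬ Reach G xstar y := by
            intro hc
            have := hreq y hc
            omega
          refine ⟨y, mem_univ _, ?_⟩
          rw [spl_hi G hry (by omega)]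
          omega
  have hsjf : jf (spl G xstar f) = jf f + 1 := by
    unfold jf; rw [hsimg, Finset.card_range]; rfl
  have hsmem : spl G xstar f ∈ BB G := by
    rw [mem_BB_iff]
    exact ⟨hsval, by rw [hsimg, hsjf]⟩
  have hsfull : ∀ y, spl G xstar f y = spl G xstar f xstar → Reach G xstar y := by
    intro y hy
    rw [hvx] at hy
    by_cases hry : Reach G xstar y
    · exact hry
    · exfalso
      by_cases h2 : f y < f xstar
      · rw [spl_lt G h2] at hy; omega
      · rw [spl_hi G hry h2] at hy; omega
  refine ⟨hsval, hsjf, hsmem, hsfull, ?_⟩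
  funext y
  show (if spl G xstar f y ≤ spl G xstar f xstar then spl G xstar f y else spl G xstar f y - 1) = f y
  rw [hvx]
  by_cases hry : Reach G xstar y
  · rw [spl_reach G hmin hval hry, if_pos (le_refl _), hreq y hry]
  · by_cases h2 : f y < f xstar
    · rw [spl_lt G h2, if_pos (by omega)]
    · rw [spl_hi G hry h2, if_neg (by omega)]
      omega


end Invol

lemma sum_BB_zero {xstar a0 : Fin n}
    (hmin : ∀ y, Reach G xstar y → Reach G y xstar)
    (hra : Reach G a0 xstar) (hna : ¬ Reach G xstar a0) :
    ∑ f ∈ BB G, (-1 : ℚ)^(jf f) = 0 := by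
  classical
  apply Finset.sum_involution
    (g := fun f _ => if (∀ y, f y = f xstar → Reach G xstar y)
      then mrg xstar f else spl G xstar f)
  · -- zero-sum pairs
    intro f hf
    have key : ∀ a b : ℕ, a = b + 1 → (-1 : ℚ)^a + (-1 : ℚ)^b = 0 := by
      intro a b h
      subst h
      rw [pow_succ]
      ring
    obtain ⟨hval, himg⟩ := (mem_BB_iff G).1 hf
    by_cases hfull : ∀ y, f y = f xstar → Reach G xstar y
    · rw [if_pos hfull]
      obtain ⟨-, hjf, -, hJ, -, -⟩ := caseA G hmin hra hna hval himg hfull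
      rw [hjf]
      exact key _ _ (by omega)
    · rw [if_neg hfull]
      obtain ⟨-, hjf, -, -, -⟩ := caseB G hmin hval himg hfull
      rw [hjf, add_comm]
      exact key _ _ (by omega)
  · -- g_ne
    intro f hf _
    obtain ⟨hval, himg⟩ := (mem_BB_iff G).1 hf
    by_cases hfull : ∀ y, f y = f xstar → Reach G xstar y
    · rw [if_pos hfull]
      obtain ⟨-, hjf, -, hJ, -, -⟩ := caseA G hmin hra hna hval himg hfull
      intro hcon
      have := congrArg jf hcon
      rw [hjf] at this
      omega
    · rw [if_neg hfull]
      obtain ⟨-, hjf, -, -, -⟩ := caseB G hmin hval himg hfull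
      intro hcon
      have := congrArg jf hcon
      rw [hjf] at this
      omega
  · -- g_mem
    intro f hf
    obtain ⟨hval, himg⟩ := (mem_BB_iff G).1 hf
    by_cases hfull : ∀ y, f y = f xstar → Reach G xstar y
    · rw [if_pos hfull]
      exact (caseA G hmin hra hna hval himg hfull).2.2.1
    · rw [if_neg hfull]
      exact (caseB G hmin hval himg hfull).2.2.1
  · -- g_inv
    intro f hf
    obtain ⟨hval, himg⟩ := (mem_BB_iff G).1 hf
    by_cases hfull : ∀ y, f y = f xstar → Reach G xstar y
    · rw [if_pos hfull]
      obtain ⟨hmval, -, hmmem, -, hnotfull, hsplmrg⟩ := caseA G hmin hra hna hval himg hfull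
      rw [if_neg hnotfull]
      exact hsplmrg
    · rw [if_neg hfull]
      obtain ⟨hsval, -, hsmem, hsfull, hmrgspl⟩ := caseB G hmin hval himg hfull
      rw [if_pos hsfull]
      exact hmrgspl

lemma sum_S_eq : ∑ j ∈ range (n+1), (-1 : ℚ)^j * S G j = ∑ f ∈ BB G, (-1 : ℚ)^(jf f) := by
  classical
  rw [← Finset.sum_fiberwise_of_maps_to (g := jf) (t := range (n+1))
    (fun g hg => by
      rw [Finset.mem_range]
      have : jf g ≤ n := by
        calc jf g = (univ.image g).card := rfl
        _ ≤ (univ : Finset (Fin n)).card := Finset.card_image_le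
        _ = n := by simp
      omega)]
  apply Finset.sum_congr rfl
  intro j hj
  rw [Finset.sum_congr rfl (fun g hg => by rw [(Finset.mem_filter.1 hg).2]),
    Finset.sum_const, nsmul_eq_mul]
  rw [mul_comm]
  rfl

lemma sum_S_zero (hnt : ¬ TotCyclic n k G) :
    ∑ j ∈ range (n+1), (-1 : ℚ)^j * S G j = 0 := by
  rw [sum_S_eq]
  unfold TotCyclic at hnt
  push_neg at hnt
  obtain ⟨i0, hi0⟩ := hnt
  obtain ⟨xstar, hbx, hmin⟩ := exists_min G ((G i0).2)
  have hnr := not_reach_of_not_cyclic G hi0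
  have hra : Reach G ((G i0).1) xstar :=
    Relation.ReflTransGen.trans (Relation.ReflTransGen.single ⟨i0, Prod.mk.eta.symm⟩) hbx
  have hna : ¬ Reach G xstar ((G i0).1) := fun h => hnr (Relation.ReflTransGen.trans hbx h)
  exact sum_BB_zero G hmin hra hna


end S7

/-- For the polynomial `P = χ_G^≥` interpolating the weak order-preserving
coloring counts, `P(-1) = (-1)^{β₀ G}` if `G` is totally cyclic and `P(-1) = 0`
otherwise. -/
theorem stmt7 (n k : ℕ) (G : Fin k → Fin n × Fin n) (P : Polynomial ℚ)
    (hP : ∀ q : ℕ, 0 < q → P.eval (q : ℚ)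
      = ((univ.filter fun f : Fin n → Fin q => ∀ i, f (G i).2 ≤ f (G i).1).card : ℚ)) :
    (TotCyclic n k G → P.eval (-1) = (-1 : ℚ) ^ beta0 n k G) ∧
    (¬ TotCyclic n k G → P.eval (-1) = 0) := by
  classical
  have hset : ∀ q : ℕ, #(univ.filter fun f : Fin n → Fin q => ∀ i, f (G i).2 ≤ f (G i).1)
      = #{f : Fin n → Fin q | S7.Valid G f} := by
    intro q
    congr 1
  constructor
  · intro htc
    have hPX : P = Polynomial.X ^ (beta0 n k G) := by
      apply S7.eq_of_eval_nat_eq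
      intro q hq
      rw [hP q hq, hset q, S7.count_tc G htc q, Polynomial.eval_pow, Polynomial.eval_X]
      push_cast
      rfl
    rw [hPX, Polynomial.eval_pow, Polynomial.eval_X]
  · intro hnt
    have h1 := S7.P_eval_neg_one G P (fun q hq => by rw [hP q hq, hset q])
    rw [h1, S7.sum_S_zero G hnt]
end

section
/- For any loopless directed multigraph G with k edges, B_G(q,y,z) = Σ_{Φ ⊆ G} [B_Φ]_{e(Φ)}(q, y−1, z−1), where the sum is over all spanning subgraphs Φ (edge-subsets) of G, e(Φ) is the number of edges of Φ, and [P]_m selects the terms of P of total degree m in y and z. -/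
open Finset

/-- Bernardi polynomial of the spanning subgraph of `G` with edge set `S`, at
`q` colors, as a polynomial in `y = X 0`, `z = X 1`. -/
noncomputable def BpolyOn (n k q : ℕ) (G : Fin k → Fin n × Fin n) (S : Finset (Fin k)) :
    MvPolynomial (Fin 2) ℚ :=
  ∑ f : Fin n → Fin q,
    MvPolynomial.X 0 ^ (S.filter fun i => f (G i).1 < f (G i).2).card *
    MvPolynomial.X 1 ^ (S.filter fun i => f (G i).2 < f (G i).1).card

/-- Truncation `[P]_m`: keep only monomials of total degree `m` in `y,z`. -/
noncomputable def trunc (m : ℕ) (P : MvPolynomial (Fin 2) ℚ) : MvPolynomial (Fin 2) ℚ :=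
  ∑ d ∈ P.support.filter fun d => d 0 + d 1 = m, MvPolynomial.monomial d (P.coeff d)

open MvPolynomial in
lemma coeff_trunc (m : ℕ) (P : MvPolynomial (Fin 2) ℚ) (e : Fin 2 →₀ ℕ) :
    (trunc m P).coeff e = if e 0 + e 1 = m then P.coeff e else 0 := by
  unfold trunc
  rw [MvPolynomial.coeff_sum]
  simp only [MvPolynomial.coeff_monomial]
  rw [Finset.sum_ite_eq']
  by_cases h : e 0 + e 1 = m
  · by_cases hc : P.coeff e = 0 <;>
      simp [h, hc, MvPolynomial.mem_support_iff]
  · simp [h]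

open MvPolynomial in
lemma trunc_sum {ι : Type*} (s : Finset ι) (m : ℕ) (f : ι → MvPolynomial (Fin 2) ℚ) :
    trunc m (∑ i ∈ s, f i) = ∑ i ∈ s, trunc m (f i) := by
  ext e
  rw [coeff_trunc, MvPolynomial.coeff_sum, MvPolynomial.coeff_sum]
  simp only [coeff_trunc]
  split_ifs with h
  · rfl
  · simp

open MvPolynomial in
lemma trunc_term (m a b : ℕ) :
    trunc m (X 0 ^ a * X 1 ^ b : MvPolynomial (Fin 2) ℚ) =
      if a + b = m then X 0 ^ a * X 1 ^ b else 0 := by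
  have hd : (X 0 ^ a * X 1 ^ b : MvPolynomial (Fin 2) ℚ) =
      monomial (Finsupp.single 0 a + Finsupp.single 1 b) 1 := by
    rw [X_pow_eq_monomial, X_pow_eq_monomial, monomial_mul, one_mul]
  ext e
  rw [coeff_trunc]
  by_cases hde : (Finsupp.single (0 : Fin 2) a + Finsupp.single 1 b) = e
  · subst hde
    have h0 : ((Finsupp.single (0 : Fin 2) a + Finsupp.single 1 b : Fin 2 →₀ ℕ)) 0 = a := by
      simp [Finsupp.single_apply]
    have h1 : ((Finsupp.single (0 : Fin 2) a + Finsupp.single 1 b : Fin 2 →₀ ℕ)) 1 = b := by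
      simp [Finsupp.single_apply]
    rw [h0, h1]
    split_ifs with h <;> simp [hd, coeff_monomial]
  · have hc : (X 0 ^ a * X 1 ^ b : MvPolynomial (Fin 2) ℚ).coeff e = 0 := by
      rw [hd, coeff_monomial, if_neg hde]
    split_ifs with h1 h2 <;> simp [hc]

open MvPolynomial in
/-- For loopless `G`: `B_G(q,y,z) = ∑_{Φ ⊆ G} [B_Φ]_{e(Φ)}(q, y-1, z-1)`. -/
theorem stmt8 (n k q : ℕ) (hq : 0 < q) (G : Fin k → Fin n × Fin n)
    (hG : ∀ i, (G i).1 ≠ (G i).2) :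
    BpolyOn n k q G univ =
      ∑ S ∈ (univ : Finset (Fin k)).powerset,
        (MvPolynomial.bind₁ fun j : Fin 2 => MvPolynomial.X j - 1)
          (trunc S.card (BpolyOn n k q G S)) := by
  classical
  -- Step 1: compute each summand of the RHS
  have step : ∀ S : Finset (Fin k),
      (bind₁ fun j : Fin 2 => (X j - 1 : MvPolynomial (Fin 2) ℚ))
        (trunc S.card (BpolyOn n k q G S)) =
      ∑ f : Fin n → Fin q,
        if (S.filter fun i => f (G i).1 < f (G i).2).card
            + (S.filter fun i => f (G i).2 < f (G i).1).card = S.card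
        then (X 0 - 1) ^ (S.filter fun i => f (G i).1 < f (G i).2).card
            * (X 1 - 1) ^ (S.filter fun i => f (G i).2 < f (G i).1).card
        else 0 := by
    intro S
    unfold BpolyOn
    rw [trunc_sum, map_sum]
    refine Finset.sum_congr rfl fun f _ => ?_
    rw [trunc_term]
    split_ifs with h
    · simp [map_mul, map_pow, bind₁_X_right]
    · simp
  rw [Finset.sum_congr rfl fun S _ => step S, Finset.sum_comm]
  unfold BpolyOn
  refine Finset.sum_congr rfl fun f _ => ?_
  -- fix a coloring `f`
  set N : Finset (Fin k) := univ.filter fun i => f (G i).1 ≠ f (G i).2 with hN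
  set w : Fin k → MvPolynomial (Fin 2) ℚ :=
    fun i => if f (G i).1 < f (G i).2 then X 0 - 1 else X 1 - 1 with hw
  have hcond : ∀ S : Finset (Fin k),
      ((S.filter fun i => f (G i).1 < f (G i).2).card
        + (S.filter fun i => f (G i).2 < f (G i).1).card = S.card) ↔ S ⊆ N := by
    intro S
    have hdisj : Disjoint (S.filter fun i => f (G i).1 < f (G i).2)
        (S.filter fun i => f (G i).2 < f (G i).1) := by
      rw [Finset.disjoint_left]
      intro i h1 h2
      rw [Finset.mem_filter] at h1 h2
      exact absurd h2.2 (lt_asymm h1.2)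
    have hunion : (S.filter fun i => f (G i).1 < f (G i).2)
        ∪ (S.filter fun i => f (G i).2 < f (G i).1)
        = S.filter fun i => f (G i).1 ≠ f (G i).2 := by
      ext i
      simp only [Finset.mem_union, Finset.mem_filter, ne_iff_lt_or_gt]
      tauto
    rw [← Finset.card_union_of_disjoint hdisj, hunion]
    constructor
    · intro h i hiS
      have hfe : S.filter (fun i => f (G i).1 ≠ f (G i).2) = S :=
        Finset.eq_of_subset_of_card_le (Finset.filter_subset _ _) (le_of_eq h.symm)
      rw [hN, Finset.mem_filter]
      refine ⟨Finset.mem_univ i, ?_⟩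
      have hmem : i ∈ S.filter (fun i => f (G i).1 ≠ f (G i).2) := by
        rw [hfe]; exact hiS
      exact (Finset.mem_filter.mp hmem).2
    · intro h
      have hfe : S.filter (fun i => f (G i).1 ≠ f (G i).2) = S := by
        apply Finset.filter_true_of_mem
        intro i hiS
        exact (Finset.mem_filter.mp (h hiS)).2
      rw [hfe]
  have hterm : ∀ S : Finset (Fin k), S ⊆ N →
      (X 0 - 1) ^ (S.filter fun i => f (G i).1 < f (G i).2).card
          * (X 1 - 1) ^ (S.filter fun i => f (G i).2 < f (G i).1).card
        = ∏ i ∈ S, w i := by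
    intro S hS
    have e2 : S.filter (fun i => ¬ f (G i).1 < f (G i).2)
        = S.filter (fun i => f (G i).2 < f (G i).1) := by
      ext i
      simp only [Finset.mem_filter]
      constructor
      · rintro ⟨hi, hn⟩
        have hne := (Finset.mem_filter.mp (hS hi)).2
        rcases ne_iff_lt_or_gt.mp hne with h | h
        · exact absurd h hn
        · exact ⟨hi, h⟩
      · rintro ⟨hi, h⟩
        exact ⟨hi, lt_asymm h⟩
    have p1 : ∏ i ∈ S.filter (fun i => f (G i).1 < f (G i).2), w i
        = (X 0 - 1) ^ (S.filter fun i => f (G i).1 < f (G i).2).card := by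
      rw [Finset.prod_congr rfl (fun i hi => ?_), Finset.prod_const]
      have := (Finset.mem_filter.mp hi).2
      simp [hw, this]
    have p2 : ∏ i ∈ S.filter (fun i => ¬ f (G i).1 < f (G i).2), w i
        = (X 1 - 1) ^ (S.filter fun i => f (G i).2 < f (G i).1).card := by
      rw [e2, Finset.prod_congr rfl (fun i hi => ?_), Finset.prod_const]
      have := (Finset.mem_filter.mp hi).2
      simp [hw, lt_asymm this]
    rw [← Finset.prod_filter_mul_prod_filter_not S (fun i => f (G i).1 < f (G i).2), p1, p2]
  have hsum : ∑ S ∈ (univ : Finset (Fin k)).powerset,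
      (if (S.filter fun i => f (G i).1 < f (G i).2).card
          + (S.filter fun i => f (G i).2 < f (G i).1).card = S.card
      then (X 0 - 1) ^ (S.filter fun i => f (G i).1 < f (G i).2).card
          * (X 1 - 1) ^ (S.filter fun i => f (G i).2 < f (G i).1).card
      else 0)
      = ∑ S ∈ N.powerset, ∏ i ∈ S, w i := by
    have h1 : ∀ S ∈ (univ : Finset (Fin k)).powerset,
        (if (S.filter fun i => f (G i).1 < f (G i).2).card
            + (S.filter fun i => f (G i).2 < f (G i).1).card = S.card
        then (X 0 - 1) ^ (S.filter fun i => f (G i).1 < f (G i).2).card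
            * (X 1 - 1) ^ (S.filter fun i => f (G i).2 < f (G i).1).card
        else 0)
        = (if S ∈ N.powerset then ∏ i ∈ S, w i else 0) := by
      intro S _
      by_cases hSN : S ⊆ N
      · rw [if_pos ((hcond S).mpr hSN), if_pos (Finset.mem_powerset.mpr hSN), hterm S hSN]
      · rw [if_neg (fun h => hSN ((hcond S).mp h)),
          if_neg (fun h => hSN (Finset.mem_powerset.mp h))]
    rw [Finset.sum_congr rfl h1, Finset.sum_ite_mem,
      Finset.inter_eq_right.mpr (Finset.powerset_mono.mpr (Finset.subset_univ N))]
  have hps : ∑ S ∈ N.powerset, ∏ i ∈ S, w i = ∏ i ∈ N, (w i + 1) := by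
    rw [Finset.prod_add]
    exact Finset.sum_congr rfl fun S _ => by simp
  rw [hsum, hps]
  have e1 : N.filter (fun i => f (G i).1 < f (G i).2)
      = univ.filter fun i => f (G i).1 < f (G i).2 := by
    ext i
    simp only [hN, Finset.mem_filter, Finset.filter_filter, Finset.mem_univ, true_and]
    exact ⟨fun h => h.2, fun h => ⟨ne_of_lt h, h⟩⟩
  have e2 : N.filter (fun i => ¬ f (G i).1 < f (G i).2)
      = univ.filter fun i => f (G i).2 < f (G i).1 := by
    ext i
    simp only [hN, Finset.mem_filter, Finset.filter_filter, Finset.mem_univ, true_and]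
    constructor
    · rintro ⟨hne, hnlt⟩
      rcases ne_iff_lt_or_gt.mp hne with h | h
      · exact absurd h hnlt
      · exact h
    · intro h
      exact ⟨(ne_of_lt h).symm, lt_asymm h⟩
  have p1 : ∏ i ∈ N.filter (fun i => f (G i).1 < f (G i).2), (w i + 1)
      = X 0 ^ (univ.filter fun i => f (G i).1 < f (G i).2).card := by
    rw [Finset.prod_congr rfl (fun i hi => ?_), Finset.prod_const, e1]
    have := (Finset.mem_filter.mp hi).2
    simp [hw, this]
  have p2 : ∏ i ∈ N.filter (fun i => ¬ f (G i).1 < f (G i).2), (w i + 1)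
      = X 1 ^ (univ.filter fun i => f (G i).2 < f (G i).1).card := by
    rw [Finset.prod_congr rfl (fun i hi => ?_), Finset.prod_const, e2]
    have := (Finset.mem_filter.mp hi).2
    simp [hw, this]
  rw [← Finset.prod_filter_mul_prod_filter_not N (fun i => f (G i).1 < f (G i).2), p1, p2]
end

section
/- Let G be a loopless undirected multigraph on {1,...,n} with k edges. Then Σ_{Φ ⊆ G} 2^{k−e(Φ)} (−1)^{k−e(Φ)} Z_Φ(q,v) = (−1)^k Z_G(q,−v), where the sum runs over all spanning subgraphs Φ (edge-subsets) of G and e(Φ) is the number of edges of Φ. -/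
open Finset

/-- Potts partition function of the spanning subgraph of `G` with edge set `S`,
at `q` colors. -/
noncomputable def ZOn (n k q : ℕ) (G : Fin k → Fin n × Fin n) (S : Finset (Fin k)) (v : ℂ) : ℂ :=
  ∑ f : Fin n → Fin q, ∏ i ∈ S, (1 + v * (if f (G i).1 = f (G i).2 then 1 else 0))

/-- For a loopless undirected multigraph `G` with `k` edges:
`∑_{Φ ⊆ G} 2^{k-e(Φ)} (-1)^{k-e(Φ)} Z_Φ(q,v) = (-1)^k Z_G(q,-v)`. -/
theorem stmt12 (n k q : ℕ) (hq : 0 < q) (G : Fin k → Fin n × Fin n)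
    (hG : ∀ i, (G i).1 ≠ (G i).2) (v : ℂ) :
    ∑ S ∈ (univ : Finset (Fin k)).powerset,
        (2 : ℂ) ^ (k - S.card) * (-1 : ℂ) ^ (k - S.card) * ZOn n k q G S v
      = (-1 : ℂ) ^ k * ZOn n k q G univ (-v) := by
  simp only [ZOn, Finset.mul_sum]
  rw [Finset.sum_comm]
  refine Finset.sum_congr rfl fun f _ => ?_
  have h1 : ((-1 : ℂ) ^ k) * ∏ i : Fin k,
      (1 + (-v) * (if f (G i).1 = f (G i).2 then 1 else 0))
      = ∏ i : Fin k, ((1 + v * (if f (G i).1 = f (G i).2 then 1 else 0)) + (-2)) := by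
    rw [show ((-1 : ℂ) ^ k) = ∏ _i : Fin k, (-1 : ℂ) by simp, ← Finset.prod_mul_distrib]
    exact Finset.prod_congr rfl fun i _ => by ring
  rw [h1, Finset.prod_add]
  refine Finset.sum_congr rfl fun S hS => ?_
  rw [Finset.prod_const, Finset.card_sdiff_of_subset (Finset.mem_powerset.mp hS), Finset.card_univ,
    Fintype.card_fin]
  rw [show ((-2 : ℂ)) = (-1) * 2 by norm_num, mul_pow]; ring
end

section
/- In the free module on directed multigraphs Γ_{n,k}, define 𝓧^{≥}_{n,k}(q) = Σ_G χ_G^{≥}(q)·G and 𝓧^{>}_{n,k}(q) = Σ_G χ_G^{>}(q)·G. Then Δ 𝓧^{≥}_{n,k}(q) = (−1)^k 𝓧^{>}_{n,k}(q), where Δ is the Laplace operator. -/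
open Finset

/-- Coefficient of `G` in `B_i H`: the operator `B_i` fixes `H` if its `i`-th
edge is not a loop, and sends `H` with `i`-th edge the loop `(a,a)` to
`-∑_{m ≠ a}` (`H` with `i`-th edge replaced by `(a,m)`). -/
def bcoeff (n k : ℕ) (i : Fin k) (H G : Fin k → Fin n × Fin n) : ℤ :=
  if (H i).1 = (H i).2 then
    (if (∀ j, j ≠ i → G j = H j) ∧ (G i).1 = (H i).1 ∧ (G i).1 ≠ (G i).2 then -1 else 0)
  else (if G = H then 1 else 0)

/-- The operator `B_i`, extended linearly to the free module on `Γ_{n,k}`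
(realized as `R`-valued coefficient functions on `Γ_{n,k}`). -/
noncomputable def Bop {R : Type*} [CommRing R] (n k : ℕ) (i : Fin k)
    (x : (Fin k → Fin n × Fin n) → R) : (Fin k → Fin n × Fin n) → R :=
  fun G => ∑ H : Fin k → Fin n × Fin n, bcoeff n k i H G • x H

/-- The Laplace operator `Δ = B₁ ⋯ B_k`. -/
noncomputable def Delta {R : Type*} [CommRing R] (n k : ℕ) :
    ((Fin k → Fin n × Fin n) → R) → ((Fin k → Fin n × Fin n) → R) :=
  (List.finRange k).foldr (fun i F => Bop n k i ∘ F) id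

/-- mixed count: strict (reversed) on S, weak elsewhere -/
def Xc (n k q : ℕ) (S : Finset (Fin k)) (G : Fin k → Fin n × Fin n) : ℚ :=
  ((univ.filter fun f : Fin n → Fin q =>
      ∀ j, if j ∈ S then f (G j).1 < f (G j).2 else f (G j).2 ≤ f (G j).1).card : ℚ)

lemma Bop_smul (n k : ℕ) (i : Fin k) (c : ℚ) (x : (Fin k → Fin n × Fin n) → ℚ) :
    Bop n k i (fun G => c * x G) = fun G => c * Bop n k i x G := by
  funext G
  simp only [Bop, Finset.mul_sum, zsmul_eq_mul]
  exact Finset.sum_congr rfl fun H _ => by ring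

lemma Bop_X (n k q : ℕ) (i : Fin k) (S : Finset (Fin k)) (hi : i ∉ S) :
    Bop n k i (Xc n k q S) = fun G => - Xc n k q (insert i S) G := by
  funext G
  by_cases h : (G i).1 = (G i).2
  · have h1 : Bop n k i (Xc n k q S) G = 0 := by
      unfold Bop
      apply Finset.sum_eq_zero
      intro H _
      by_cases hH : (H i).1 = (H i).2
      · simp only [bcoeff, if_pos hH]
        rw [if_neg]
        · simp
        · rintro ⟨-, -, hne⟩; exact hne h
      · simp only [bcoeff, if_neg hH]
        rw [if_neg]
        · simp
        · rintro rfl; exact hH h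
    have h2 : Xc n k q (insert i S) G = 0 := by
      unfold Xc
      norm_cast
      rw [Finset.card_eq_zero, Finset.filter_eq_empty_iff]
      intro f _
      push_neg
      refine ⟨i, ?_⟩
      simp [h]
    rw [h1, h2, neg_zero]
  · set G' := Function.update G i ((G i).1, (G i).1) with hG'
    have hGne : G ≠ G' := by
      intro hEq
      apply h
      have := congrFun hEq i
      rw [hG', Function.update_self] at this
      rw [this]
    have hsum : Bop n k i (Xc n k q S) G = Xc n k q S G - Xc n k q S G' := by
      unfold Bop
      have : ∀ H : Fin k → Fin n × Fin n,
          bcoeff n k i H G • Xc n k q S H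
            = (if H = G then Xc n k q S G else 0)
              + (if H = G' then -Xc n k q S G' else 0) := by
        intro H
        by_cases hH : (H i).1 = (H i).2
        · have hHG : H ≠ G := by
            rintro rfl; exact h hH
          rw [if_neg hHG]
          simp only [bcoeff, if_pos hH]
          by_cases hc : (∀ j, j ≠ i → G j = H j) ∧ (G i).1 = (H i).1 ∧ (G i).1 ≠ (G i).2
          · have hHG' : H = G' := by
              funext j
              by_cases hj : j = i
              · subst hj
                rw [hG', Function.update_self]
                have h1 := hc.2.1
                refine Prod.ext h1.symm ?_
                rw [← hH]; exact h1.symm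
              · rw [hG', Function.update_of_ne hj]
                exact (hc.1 j hj).symm
            rw [if_pos hc, if_pos hHG', hHG']
            simp
          · have hHG' : H ≠ G' := by
              intro hEq
              apply hc
              subst hEq
              refine ⟨fun j hj => (Function.update_of_ne hj _ _).symm, ?_, h⟩
              rw [hG', Function.update_self]
            rw [if_neg hc, if_neg hHG']
            simp
        · simp only [bcoeff, if_neg hH]
          have hHG' : H ≠ G' := by
            intro hEq
            apply hH
            rw [hEq, hG', Function.update_self]
          rw [if_neg hHG']
          by_cases hGH : G = H
          · rw [if_pos hGH, if_pos hGH.symm, hGH]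
            simp
          · rw [if_neg hGH, if_neg (Ne.symm hGH)]
            simp
      rw [Finset.sum_congr rfl fun H _ => this H, Finset.sum_add_distrib]
      simp [sub_eq_add_neg]
    rw [hsum]
    -- counting identity: Xc S G' = Xc S G + Xc (insert i S) G
    have key : Xc n k q S G' = Xc n k q S G + Xc n k q (insert i S) G := by
      unfold Xc
      norm_cast
      set A' : Finset (Fin n → Fin q) := univ.filter fun f =>
        ∀ j, if j ∈ S then f (G' j).1 < f (G' j).2 else f (G' j).2 ≤ f (G' j).1 with hA'
      have hGj : ∀ j, j ≠ i → G' j = G j := fun j hj => Function.update_of_ne hj _ _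
      have hA : (univ.filter fun f : Fin n → Fin q =>
          ∀ j, if j ∈ S then f (G j).1 < f (G j).2 else f (G j).2 ≤ f (G j).1)
          = A'.filter fun f => f (G i).2 ≤ f (G i).1 := by
        rw [hA', Finset.filter_filter]
        apply Finset.filter_congr
        intro f _
        constructor
        · intro hf
          refine ⟨fun j => ?_, ?_⟩
          · by_cases hj : j = i
            · subst hj
              rw [if_neg hi, hG', Function.update_self]
            · rw [hGj j hj]; exact hf j
          · have := hf i; rw [if_neg hi] at this; exact this
        · rintro ⟨hf, hfi⟩ j
          by_cases hj : j = i
          · subst hj; rw [if_neg hi]; exact hfi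
          · rw [← hGj j hj]; exact hf j
      have hB : (univ.filter fun f : Fin n → Fin q =>
          ∀ j, if j ∈ insert i S then f (G j).1 < f (G j).2 else f (G j).2 ≤ f (G j).1)
          = A'.filter fun f => ¬ f (G i).2 ≤ f (G i).1 := by
        rw [hA', Finset.filter_filter]
        apply Finset.filter_congr
        intro f _
        constructor
        · intro hf
          refine ⟨fun j => ?_, ?_⟩
          · by_cases hj : j = i
            · subst hj
              rw [if_neg hi, hG', Function.update_self]
            · rw [hGj j hj]
              have := hf j
              simpa only [Finset.mem_insert, hj, false_or] using this
          · have := hf i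
            rw [if_pos (Finset.mem_insert_self i S)] at this
            exact not_le.2 this
        · rintro ⟨hf, hfi⟩ j
          by_cases hj : j = i
          · subst hj
            rw [if_pos (Finset.mem_insert_self j S)]
            exact not_le.1 hfi
          · simp only [Finset.mem_insert, hj, false_or]
            rw [← hGj j hj]
            exact hf j
      rw [hA, hB]
      exact (Finset.card_filter_add_card_filter_not _).symm
    rw [key]
    ring

lemma foldr_X (n k q : ℕ) (l : List (Fin k)) (hl : l.Nodup) (S : Finset (Fin k))
    (hS : ∀ i ∈ l, i ∉ S) :
    (l.foldr (fun i F => Bop n k i ∘ F) id) (Xc n k q S)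
      = fun G => (-1 : ℚ) ^ l.length * Xc n k q (S ∪ l.toFinset) G := by
  induction l with
  | nil => simp
  | cons i l ih =>
    have hnd := List.nodup_cons.1 hl
    rw [List.foldr_cons, Function.comp_apply,
      ih hnd.2 (fun j hj => hS j (List.mem_cons_of_mem i hj)),
      Bop_smul, Bop_X n k q i (S ∪ l.toFinset) (by
        simp only [Finset.mem_union, List.mem_toFinset]
        rintro (h | h)
        · exact hS i List.mem_cons_self h
        · exact hnd.1 h)]
    funext G
    rw [List.toFinset_cons, Finset.union_insert]
    push_cast
    ring_nf
    rw [List.length_cons]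
    ring


/-- Universal chromatic identity: `Δ 𝓧^{≥}_{n,k}(q) = (-1)^k 𝓧^{>}_{n,k}(q)`,
where the coefficient of `G` in `𝓧^{≥}` (resp. `𝓧^{>}`) counts maps
`f : {1,…,n} → {1,…,q}` with `f(a) ≥ f(b)` (resp. `f(a) > f(b)`) for every edge
`(a,b)` of `G`. -/
theorem stmt16 (n k q : ℕ) (hq : 0 < q) :
    Delta n k (fun G : Fin k → Fin n × Fin n =>
        ((univ.filter fun f : Fin n → Fin q => ∀ i, f (G i).2 ≤ f (G i).1).card : ℚ))
      = fun G =>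
        (-1 : ℚ) ^ k *
          ((univ.filter fun f : Fin n → Fin q => ∀ i, f (G i).2 < f (G i).1).card : ℚ) := by
  have h0 : (fun G : Fin k → Fin n × Fin n =>
      ((univ.filter fun f : Fin n → Fin q => ∀ i, f (G i).2 ≤ f (G i).1).card : ℚ))
      = Xc n k q ∅ := by
    funext G; unfold Xc; simp
  rw [Delta, h0, foldr_X n k q (List.finRange k) (List.nodup_finRange k) ∅ (by simp)]
  funext G
  rw [List.length_finRange, List.toFinset_finRange, Finset.empty_union]
  congr 1
  unfold Xc
  norm_cast
  apply Finset.card_bij' (fun f _ => Fin.rev ∘ f) (fun f _ => Fin.rev ∘ f)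
  · intro f hf
    simp only [Finset.mem_filter, Finset.mem_univ, if_true, true_and] at hf ⊢
    intro j
    simpa [Fin.rev_lt_rev, Function.comp] using hf j
  · intro f hf
    simp only [Finset.mem_filter, Finset.mem_univ, if_true, true_and] at hf ⊢
    intro j
    simpa [Fin.rev_lt_rev, Function.comp] using hf j
  · intro f _; funext x; simp
  · intro f _; funext x; simp
end

section
/- Let det_{n,k} = ((−1)^k / k!) Σ_{G ∈ SSC_{n,k}} (−1)^{β₀(G)} · G, where SSC_{n,k} is the set of totally cyclic directed multigraphs in Γ_{n,k} and β₀(G) is the number of connected components. Then Δ det_{n,k} = ((−1)^n / k!) Σ_{G ∈ AC_{n,k}} G, where AC_{n,k} is the set of acyclic directed multigraphs in Γ_{n,k} and Δ is the Laplace operator. -/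
open Finset

open scoped Classical

/-- `G` contains a directed cycle. -/
def HasCycle (n k : ℕ) (G : Fin k → Fin n × Fin n) : Prop :=
  ∃ m : ℕ, 0 < m ∧ ∃ c : ZMod m → Fin k,
    ∀ j : ZMod m, (G (c j)).2 = (G (c (j + 1))).1

/-- The higher determinant `det_{n,k} = ((-1)^k/k!) ∑_{G totally cyclic} (-1)^{β₀ G} G`. -/
noncomputable def detnk (n k : ℕ) : (Fin k → Fin n × Fin n) → ℚ := fun G =>
  if TotCyclic n k G then ((-1 : ℚ) ^ k / k.factorial) * (-1 : ℚ) ^ beta0 n k G else 0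


section Walks
variable {n k : ℕ}

def IsWalk (G : Fin k → Fin n × Fin n) (T : Finset (Fin k)) (m : ℕ) (c : ZMod m → Fin k) : Prop :=
  (∀ j, (G (c j)).2 = (G (c (j + 1))).1) ∧ ∀ j, c j ∈ T

def CycIn (G : Fin k → Fin n × Fin n) (T : Finset (Fin k)) : Prop :=
  ∃ m : ℕ, 0 < m ∧ ∃ c : ZMod m → Fin k, IsWalk G T m c

def OnCyc (G : Fin k → Fin n × Fin n) (T : Finset (Fin k)) (i : Fin k) : Prop :=
  ∃ m : ℕ, 0 < m ∧ ∃ c : ZMod m → Fin k, IsWalk G T m c ∧ ∃ j, c j = i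

def TotCyc (G : Fin k → Fin n × Fin n) (T : Finset (Fin k)) : Prop := ∀ i ∈ T, OnCyc G T i

lemma walk_all {m : ℕ} (hm : 0 < m) (P : ZMod m → Prop)
    (step : ∀ j, P j → P (j + 1)) (j₀ : ZMod m) (h0 : P j₀) : ∀ j, P j := by
  haveI : NeZero m := ⟨hm.ne'⟩
  have key : ∀ t : ℕ, P (j₀ + t) := by
    intro t
    induction t with
    | zero => simpa using h0
    | succ t ih =>
        have := step _ ih
        have e : (j₀ + (t:ZMod m)) + 1 = j₀ + ((t+1 : ℕ) : ZMod m) := by push_cast; ring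
        rwa [e] at this
  intro j
  have := key (j - j₀).val
  rwa [ZMod.natCast_val, ZMod.cast_id, add_sub_cancel] at this

end Walks


variable {n k : ℕ}

lemma walk_rot {G : Fin k → Fin n × Fin n} {m : ℕ} {c : ZMod m → Fin k}
    (h : ∀ j, (G (c j)).2 = (G (c (j + 1))).1) (t : ZMod m) :
    ∀ j, (G ((fun j => c (j + t)) j)).2 = (G ((fun j => c (j + t)) (j + 1))).1 := by
  intro j
  have := h (j + t)
  simpa [add_right_comm j t 1] using this

lemma walk_delete {G : Fin k → Fin n × Fin n} {m : ℕ} {c : ZMod m → Fin k} (hm : 2 ≤ m)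
    (h : ∀ j, (G (c j)).2 = (G (c (j + 1))).1) (hloop : (G (c 0)).1 = (G (c 0)).2) :
    ∃ c' : ZMod (m-1) → Fin k, (∀ j, (G (c' j)).2 = (G (c' (j + 1))).1) ∧
      (∀ j, ∃ j' : ZMod m, j' ≠ 0 ∧ c' j = c j') ∧
      (∀ j' : ZMod m, j' ≠ 0 → ∃ j, c' j = c j') := by
  haveI : NeZero m := ⟨by omega⟩
  haveI : NeZero (m-1) := ⟨by omega⟩
  refine ⟨fun j => c ((j.val + 1 : ℕ) : ZMod m), ?_, ?_, ?_⟩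
  · intro j
    beta_reduce
    set t := j.val with ht
    have htlt : t < m - 1 := ZMod.val_lt j
    have hj1 : j + 1 = ((t + 1 : ℕ) : ZMod (m-1)) := by
      have : ((t + 1 : ℕ) : ZMod (m-1)) = j + 1 := by
        push_cast
        rw [ht, ZMod.natCast_val, ZMod.cast_id]
      exact this.symm
    by_cases hc : t + 1 < m - 1
    · have hv1 : ((t + 1 : ℕ) : ZMod (m-1)).val = t + 1 := ZMod.val_cast_of_lt hc
      rw [hj1]
      beta_reduce
      rw [hv1]
      have horig := h ((t + 1 : ℕ) : ZMod m)
      have e2 : ((t + 1 : ℕ) : ZMod m) + 1 = ((t + 1 + 1 : ℕ) : ZMod m) := by push_cast; ring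
      rwa [e2] at horig
    · have hte : t + 1 = m - 1 := by omega
      have hv0 : ((t + 1 : ℕ) : ZMod (m-1)).val = 0 := by
        rw [hte]; simp [ZMod.natCast_self]
      rw [hj1]
      beta_reduce
      rw [hv0]
      have horig := h ((t + 1 : ℕ) : ZMod m)
      have e2 : ((t + 1 : ℕ) : ZMod m) + 1 = 0 := by
        rw [hte]
        have : ((m - 1 : ℕ) : ZMod m) + 1 = ((m - 1 + 1 : ℕ) : ZMod m) := by push_cast; ring
        rw [this, (by omega : m - 1 + 1 = m), ZMod.natCast_self]
      rw [e2] at horig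
      have h0 := h 0
      rw [horig, hloop, h0]
      norm_num
  · intro j
    refine ⟨((j.val + 1 : ℕ) : ZMod m), ?_, rfl⟩
    have : j.val + 1 < m := by have := ZMod.val_lt j; omega
    intro hzero
    have := ZMod.val_cast_of_lt this
    rw [hzero, ZMod.val_zero] at this
    omega
  · intro j' hj'
    have hv : j'.val ≠ 0 := fun h0 => hj' ((ZMod.val_eq_zero j').1 h0)
    have hvlt : j'.val < m := ZMod.val_lt j'
    refine ⟨((j'.val - 1 : ℕ) : ZMod (m-1)), ?_⟩
    have hv2 : ((j'.val - 1 : ℕ) : ZMod (m-1)).val = j'.val - 1 :=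
      ZMod.val_cast_of_lt (by omega)
    beta_reduce
    rw [hv2, (by omega : j'.val - 1 + 1 = j'.val), ZMod.natCast_val j', ZMod.cast_id]


variable {n k : ℕ}

def loopify (G : Fin k → Fin n × Fin n) (S : Finset (Fin k)) : Fin k → Fin n × Fin n :=
  fun i => if i ∈ S then ((G i).1, (G i).1) else G i

lemma loopify_mem {G : Fin k → Fin n × Fin n} {S : Finset (Fin k)} {i : Fin k} (h : i ∈ S) :
    loopify G S i = ((G i).1, (G i).1) := if_pos h

lemma loopify_notMem {G : Fin k → Fin n × Fin n} {S : Finset (Fin k)} {i : Fin k} (h : i ∉ S) :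
    loopify G S i = G i := if_neg h

lemma purge {G : Fin k → Fin n × Fin n} {S : Finset (Fin k)} {i : Fin k} (hi : i ∉ S) :
    ∀ m : ℕ, 0 < m → ∀ c : ZMod m → Fin k,
      (∀ j, ((loopify G S) (c j)).2 = ((loopify G S) (c (j + 1))).1) → (∃ j, c j = i) →
      ∃ m' : ℕ, 0 < m' ∧ ∃ c' : ZMod m' → Fin k,
        (∀ j, (G (c' j)).2 = (G (c' (j + 1))).1) ∧ (∀ j, c' j ∉ S) ∧ ∃ j, c' j = i := by
  intro m
  induction m using Nat.strong_induction_on with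
  | _ m IH =>
    intro hm c cond hcont
    obtain ⟨j₀, hj₀⟩ := hcont
    by_cases hall : ∀ j, c j ∉ S
    · refine ⟨m, hm, c, fun j => ?_, hall, j₀, hj₀⟩
      have := cond j
      rwa [loopify_notMem (hall j), loopify_notMem (hall (j+1))] at this
    · push_neg at hall
      obtain ⟨j₁, hj₁⟩ := hall
      -- m ≥ 2
      have hm2 : 2 ≤ m := by
        by_contra hcon
        have hm1 : m = 1 := by omega
        subst hm1
        have hEq : c j₀ = c j₁ := by rw [Subsingleton.elim j₀ j₁]
        rw [hj₀] at hEq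
        exact hi (hEq ▸ hj₁)
      set c₁ : ZMod m → Fin k := fun j => c (j + j₁) with hc₁
      have cond₁ : ∀ j, ((loopify G S) (c₁ j)).2 = ((loopify G S) (c₁ (j + 1))).1 := by
        intro j
        have := cond (j + j₁)
        simpa [hc₁, add_right_comm j j₁ 1] using this
      have hmem0 : c₁ 0 ∈ S := by simpa [hc₁] using hj₁
      have hloop : ((loopify G S) (c₁ 0)).1 = ((loopify G S) (c₁ 0)).2 := by
        rw [loopify_mem hmem0]
      obtain ⟨c', cond', hment, hsurj⟩ := walk_delete hm2 cond₁ hloop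
      have hne : (j₀ - j₁ : ZMod m) ≠ 0 := by
        intro h0
        have : c₁ (j₀ - j₁) = i := by simp [hc₁, sub_add_cancel, hj₀]
        rw [h0] at this
        exact hi (this ▸ hmem0)
      obtain ⟨j₂, hj₂⟩ := hsurj _ hne
      have hcont' : ∃ j, c' j = i := ⟨j₂, by rw [hj₂]; simp [hc₁, sub_add_cancel, hj₀]⟩
      exact IH (m-1) (by omega) (by omega) c' cond' hcont'


lemma Bop_eval (i : Fin k) (x : (Fin k → Fin n × Fin n) → ℚ) (G : Fin k → Fin n × Fin n) :
    Bop n k i x G = if (G i).1 = (G i).2 then 0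
      else x G - x (Function.update G i ((G i).1, (G i).1)) := by
  unfold Bop
  by_cases h : (G i).1 = (G i).2
  · rw [if_pos h]
    apply Finset.sum_eq_zero
    intro H _
    suffices hb : bcoeff n k i H G = 0 by rw [hb]; simp
    unfold bcoeff
    by_cases hH : (H i).1 = (H i).2
    · rw [if_pos hH, if_neg]
      rintro ⟨-, -, hne⟩; exact hne h
    · rw [if_neg hH, if_neg]
      rintro rfl; exact hH h
  · rw [if_neg h]
    set U := Function.update G i ((G i).1, (G i).1) with hU
    have hGU : G ≠ U := by
      intro hEq
      have : G i = U i := by rw [← hEq]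
      rw [hU, Function.update_self] at this
      exact h (by rw [this])
    rw [← Finset.sum_subset (Finset.subset_univ ({G, U} : Finset (Fin k → Fin n × Fin n)))]
    · rw [Finset.sum_pair hGU]
      have c1 : bcoeff n k i G G = 1 := by
        unfold bcoeff
        rw [if_neg h, if_pos rfl]
      have c2 : bcoeff n k i U G = -1 := by
        unfold bcoeff
        have hUi : U i = ((G i).1, (G i).1) := Function.update_self _ _ _
        rw [if_pos (by rw [hUi]), if_pos]
        refine ⟨fun j hj => (Function.update_of_ne hj _ _).symm, by rw [hUi], h⟩
      rw [c1, c2]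
      simp [sub_eq_add_neg]
    · intro H _ hH
      rw [Finset.mem_insert, Finset.mem_singleton] at hH
      push_neg at hH
      suffices hb : bcoeff n k i H G = 0 by rw [hb]; simp
      unfold bcoeff
      by_cases hHl : (H i).1 = (H i).2
      · rw [if_pos hHl, if_neg]
        rintro ⟨hoff, hfst, -⟩
        apply hH.2
        funext j
        by_cases hj : j = i
        · subst hj
          rw [hU, Function.update_self]
          have : H j = ((H j).1, (H j).2) := rfl
          rw [this, ← hHl, ← hfst]
        · rw [hU, Function.update_of_ne hj, hoff j hj]
      · rw [if_neg hHl, if_neg]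
        intro hEq
        exact hH.1 hEq.symm

lemma foldr_eval (l : List (Fin k)) (hl : l.Nodup) (x : (Fin k → Fin n × Fin n) → ℚ)
    (G : Fin k → Fin n × Fin n) :
    (l.foldr (fun i F => Bop n k i ∘ F) id) x G =
      if ∃ i ∈ l, (G i).1 = (G i).2 then 0
      else ∑ S ∈ l.toFinset.powerset, (-1:ℚ)^S.card * x (loopify G S) := by
  induction l generalizing G with
  | nil =>
      have : loopify G ∅ = G := by funext j; simp [loopify]
      simp [this]
  | cons i l ih =>
      rw [List.nodup_cons] at hl
      have hstep : (List.foldr (fun i F => Bop n k i ∘ F) id (i :: l)) x G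
          = Bop n k i ((List.foldr (fun i F => Bop n k i ∘ F) id l) x) G := rfl
      rw [hstep, Bop_eval]
      by_cases h : (G i).1 = (G i).2
      · rw [if_pos h, if_pos ⟨i, by simp, h⟩]
      · rw [if_neg h]
        set U := Function.update G i ((G i).1, (G i).1) with hU
        have hUl : ∀ j ∈ l, U j = G j := by
          intro j hj
          exact Function.update_of_ne (fun hji => hl.1 (by rw [← hji]; exact hj)) _ _
        rw [ih hl.2 G, ih hl.2 U]
        by_cases hex : ∃ j ∈ l, (G j).1 = (G j).2
        · obtain ⟨j, hjl, hjloop⟩ := hex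
          rw [if_pos ⟨j, hjl, hjloop⟩, if_pos ⟨j, hjl, by rw [hUl j hjl]; exact hjloop⟩,
            if_pos ⟨j, by simp [hjl], hjloop⟩]
          ring
        · have hexU : ¬ ∃ j ∈ l, (U j).1 = (U j).2 := by
            rintro ⟨j, hjl, hjloop⟩
            exact hex ⟨j, hjl, by rwa [hUl j hjl] at hjloop⟩
          rw [if_neg hex, if_neg hexU, if_neg (by
            rintro ⟨j, hjmem, hjloop⟩
            rcases List.mem_cons.1 hjmem with rfl | hjl
            · exact h hjloop
            · exact hex ⟨j, hjl, hjloop⟩)]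
        -- sums
          have htF : (i :: l).toFinset = insert i l.toFinset := by simp
          have hinotmem : i ∉ l.toFinset := by simpa using hl.1
          rw [htF, Finset.sum_powerset_insert hinotmem]
          have hterm : ∀ S ∈ l.toFinset.powerset,
              (-1:ℚ)^(insert i S).card * x (loopify G (insert i S))
                = -((-1:ℚ)^S.card * x (loopify U S)) := by
            intro S hS
            rw [Finset.mem_powerset] at hS
            have hiS : i ∉ S := fun hmem => hinotmem (hS hmem)
            have hcard : (insert i S).card = S.card + 1 := Finset.card_insert_of_notMem hiS
            have hloopU : loopify U S = loopify G (insert i S) := by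
              funext j
              by_cases hj : j = i
              · subst hj
                rw [loopify_notMem hiS, loopify_mem (Finset.mem_insert_self _ _), hU,
                  Function.update_self]
              · have hUj : U j = G j := Function.update_of_ne hj _ _
                by_cases hjS : j ∈ S
                · rw [loopify_mem hjS, loopify_mem (Finset.mem_insert_of_mem hjS), hUj]
                · rw [loopify_notMem hjS,
                    loopify_notMem (by simp [hj, hjS]), hUj]
            rw [hloopU, hcard]
            ring
          rw [Finset.sum_congr rfl hterm, Finset.sum_neg_distrib]
          ring

lemma Delta_eval (x : (Fin k → Fin n × Fin n) → ℚ) (G : Fin k → Fin n × Fin n) :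
    Delta n k x G = if ∃ i, (G i).1 = (G i).2 then 0
      else ∑ S ∈ (Finset.univ : Finset (Fin k)).powerset,
        (-1:ℚ)^S.card * x (loopify G S) := by
  have h := foldr_eval (List.finRange k) (List.nodup_finRange k) x G
  have h2 : Delta n k x G = (List.foldr (fun i F => Bop n k i ∘ F) id (List.finRange k)) x G := rfl
  rw [h2, h]
  have : (∃ i ∈ List.finRange k, (G i).1 = (G i).2) ↔ (∃ i, (G i).1 = (G i).2) := by
    simp [List.mem_finRange]
  rw [if_congr this rfl rfl, List.toFinset_finRange]

noncomputable def fromRelT (G : Fin k → Fin n × Fin n) (T : Finset (Fin k)) :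
    SimpleGraph (Fin n) :=
  SimpleGraph.fromRel (fun a b => ∃ i ∈ T, G i = (a, b) ∨ G i = (b, a))

noncomputable def bT (G : Fin k → Fin n × Fin n) (T : Finset (Fin k)) : ℕ :=
  Nat.card (fromRelT G T).ConnectedComponent

noncomputable def ClT (G : Fin k → Fin n × Fin n) (T : Finset (Fin k)) (v : Fin n) :
    Finset (Fin n) :=
  Finset.univ.filter (fun w => (fromRelT G T).Reachable v w)

lemma mem_ClT {G : Fin k → Fin n × Fin n} {T : Finset (Fin k)} {v w : Fin n} :
    w ∈ ClT G T v ↔ (fromRelT G T).Reachable v w := by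
  simp [ClT]

lemma self_mem_ClT {G : Fin k → Fin n × Fin n} {T : Finset (Fin k)} (v : Fin n) :
    v ∈ ClT G T v := mem_ClT.2 (SimpleGraph.Reachable.refl v)

lemma ClT_eq_of_reachable {G : Fin k → Fin n × Fin n} {T : Finset (Fin k)} {v w : Fin n}
    (h : (fromRelT G T).Reachable v w) : ClT G T v = ClT G T w := by
  ext u
  simp only [mem_ClT]
  exact ⟨fun h2 => h.symm.trans h2, fun h2 => h.trans h2⟩

lemma reachable_of_ClT_eq {G : Fin k → Fin n × Fin n} {T : Finset (Fin k)} {v w : Fin n}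
    (h : ClT G T v = ClT G T w) : (fromRelT G T).Reachable v w := by
  have := self_mem_ClT (G := G) (T := T) w
  rw [← h] at this
  exact mem_ClT.1 this

lemma bT_eq (G : Fin k → Fin n × Fin n) (T : Finset (Fin k)) :
    bT G T = (Finset.univ.image (ClT G T)).card := by
  classical
  unfold bT
  rw [Nat.card_eq_fintype_card]
  have hlift : ∀ (v w : Fin n), (fromRelT G T).Reachable v w → ClT G T v = ClT G T w :=
    fun v w h => ClT_eq_of_reachable h
  let f : (fromRelT G T).ConnectedComponent → Finset (Fin n) :=
    SimpleGraph.ConnectedComponent.lift (ClT G T) (fun v w p _ => hlift v w ⟨p⟩)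
  have hinj : Function.Injective f := by
    intro C D h
    induction C using SimpleGraph.ConnectedComponent.ind with
    | _ v =>
      induction D using SimpleGraph.ConnectedComponent.ind with
      | _ w =>
        have : ClT G T v = ClT G T w := h
        exact SimpleGraph.ConnectedComponent.sound (reachable_of_ClT_eq this)
  have himg : Finset.univ.image (ClT G T) = Finset.univ.image f := by
    ext X
    simp only [Finset.mem_image, Finset.mem_univ, true_and]
    constructor
    · rintro ⟨v, rfl⟩
      exact ⟨(fromRelT G T).connectedComponentMk v, rfl⟩
    · rintro ⟨C, rfl⟩
      induction C using SimpleGraph.ConnectedComponent.ind with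
      | _ v => exact ⟨v, rfl⟩
  rw [himg, Finset.card_image_of_injective _ hinj, Finset.card_univ]

lemma reach_touch {G : Fin k → Fin n × Fin n} {T : Finset (Fin k)} {v w : Fin n}
    (h : (fromRelT G T).Reachable v w) :
    v = w ∨ ∃ i ∈ T, (G i).1 = w ∨ (G i).2 = w := by
  obtain ⟨p⟩ := h
  induction p with
  | nil => exact Or.inl rfl
  | @cons a b c hab p ih =>
    rcases ih with rfl | hi
    · right
      rw [fromRelT, SimpleGraph.fromRel_adj] at hab
      rcases hab.2 with h' | h' <;>
        obtain ⟨i, hiT, hGi⟩ := h' <;>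
        refine ⟨i, hiT, ?_⟩ <;> rcases hGi with hGi | hGi <;>
          simp [hGi]
    · exact Or.inr hi

def EClosed (G : Fin k → Fin n × Fin n) (T : Finset (Fin k)) (W : Finset (Fin n)) : Prop :=
  ∀ i ∈ T, ((G i).1 ∈ W ↔ (G i).2 ∈ W)

lemma closed_iff_of_adj {G : Fin k → Fin n × Fin n} {T : Finset (Fin k)} {W : Finset (Fin n)}
    (hW : EClosed G T W) {a b : Fin n} (hab : (fromRelT G T).Adj a b) : (a ∈ W ↔ b ∈ W) := by
  rw [fromRelT, SimpleGraph.fromRel_adj] at hab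
  rcases hab.2 with h' | h' <;> obtain ⟨i, hiT, hGi⟩ := h' <;>
    have h2 := hW i hiT <;> rcases hGi with hGi | hGi <;> rw [hGi] at h2 <;>
      simp only [Prod.fst, Prod.snd] at h2 <;> tauto

lemma closed_reach {G : Fin k → Fin n × Fin n} {T : Finset (Fin k)} {W : Finset (Fin n)}
    (hW : EClosed G T W) {v w : Fin n} (h : (fromRelT G T).Reachable v w) :
    (v ∈ W ↔ w ∈ W) := by
  obtain ⟨p⟩ := h
  induction p with
  | nil => exact Iff.rfl
  | @cons a b c hab p ih => exact (closed_iff_of_adj hW hab).trans ih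

lemma fromRelT_mono {G : Fin k → Fin n × Fin n} {T T' : Finset (Fin k)} (h : T ⊆ T') :
    fromRelT G T ≤ fromRelT G T' := by
  intro a b hab
  rw [fromRelT, SimpleGraph.fromRel_adj] at hab ⊢
  refine ⟨hab.1, ?_⟩
  rcases hab.2 with ⟨i, hiT, hGi⟩ | ⟨i, hiT, hGi⟩
  · exact Or.inl ⟨i, h hiT, hGi⟩
  · exact Or.inr ⟨i, h hiT, hGi⟩

lemma adj_of_edge {G : Fin k → Fin n × Fin n} {T : Finset (Fin k)} {i : Fin k} (hiT : i ∈ T)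
    (hne : (G i).1 ≠ (G i).2) : (fromRelT G T).Adj (G i).1 (G i).2 := by
  rw [fromRelT, SimpleGraph.fromRel_adj]
  exact ⟨hne, Or.inl ⟨i, hiT, Or.inl rfl⟩⟩

lemma reach_of_edge {G : Fin k → Fin n × Fin n} {T : Finset (Fin k)} {i : Fin k} (hiT : i ∈ T) :
    (fromRelT G T).Reachable (G i).1 (G i).2 := by
  by_cases hne : (G i).1 = (G i).2
  · rw [hne]
  · exact (adj_of_edge hiT hne).reachable

lemma walkT_to_T3 {G : Fin k → Fin n × Fin n} {T : Finset (Fin k)} {W : Finset (Fin n)}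
    (hW : EClosed G T W) {v w : Fin n} (p : (fromRelT G T).Walk v w) (hv : v ∉ W) :
    (fromRelT G (T.filter (fun i => (G i).1 ∉ W ∧ (G i).2 ∉ W))).Reachable v w := by
  induction p with
  | nil => exact SimpleGraph.Reachable.refl _
  | @cons a b c hab p ih =>
    have hb : b ∉ W := fun hbW => hv ((closed_iff_of_adj hW hab).2 hbW)
    have hadj : (fromRelT G (T.filter (fun i => (G i).1 ∉ W ∧ (G i).2 ∉ W))).Adj a b := by
      rw [fromRelT, SimpleGraph.fromRel_adj] at hab ⊢
      refine ⟨hab.1, ?_⟩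
      have : ∀ i ∈ T, (G i = (a,b) ∨ G i = (b,a)) →
          i ∈ T.filter (fun i => (G i).1 ∉ W ∧ (G i).2 ∉ W) := by
        intro i hiT hGi
        refine Finset.mem_filter.2 ⟨hiT, ?_⟩
        rcases hGi with hGi | hGi <;> rw [hGi]
        · exact ⟨hv, hb⟩
        · exact ⟨hb, hv⟩
      rcases hab.2 with ⟨i, hiT, hGi⟩ | ⟨i, hiT, hGi⟩
      · exact Or.inl ⟨i, this i hiT hGi, hGi⟩
      · exact Or.inr ⟨i, this i hiT (Or.symm hGi), hGi⟩
    exact hadj.reachable.trans (ih hb)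

lemma reach_in_W_eq {G : Fin k → Fin n × Fin n} {T : Finset (Fin k)} {W : Finset (Fin n)}
    {v w : Fin n} (hv : v ∈ W)
    (h : (fromRelT G (T.filter (fun i => (G i).1 ∉ W ∧ (G i).2 ∉ W))).Reachable v w) :
    v = w := by
  obtain ⟨p⟩ := h
  cases p with
  | nil => rfl
  | cons hab p =>
    exfalso
    rw [fromRelT, SimpleGraph.fromRel_adj] at hab
    rcases hab.2 with ⟨i, hiT, hGi⟩ | ⟨i, hiT, hGi⟩ <;>
      rw [Finset.mem_filter] at hiT <;> rcases hGi with hGi | hGi <;>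
        rw [hGi] at hiT <;> simp at hiT <;> tauto

lemma cycle_of_seq {G : Fin k → Fin n × Fin n} {A : Finset (Fin n)} {S : Finset (Fin k)}
    (g : {x // x ∈ A} → Fin k) (hgS : ∀ v, g v ∈ S)
    (hghead : ∀ v, (G (g v)).2 = v.1) (vseq : ℕ → {x // x ∈ A})
    (hvsucc : ∀ t, (vseq (t+1)).1 = (G (g (vseq t))).1)
    (p q : ℕ) (hlt : p < q) (heq : vseq p = vseq q) : CycIn G S := by
  set m := q - p with hm
  haveI : NeZero m := ⟨by omega⟩
  refine ⟨m, by omega, fun j => g (vseq (q - 1 - j.val)), ?_, fun j => hgS _⟩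
  intro j
  beta_reduce
  have hj : j.val < m := ZMod.val_lt j
  rw [hghead (vseq (q-1-j.val))]
  have hj1 : (j + 1 : ZMod m) = ((j.val + 1 : ℕ) : ZMod m) := by
    push_cast
    rw [ZMod.natCast_val, ZMod.cast_id]
  by_cases hc : j.val + 1 < m
  · have hv1 : ((j.val + 1 : ℕ) : ZMod m).val = j.val + 1 := ZMod.val_cast_of_lt hc
    rw [hj1, hv1]
    have e : q - 1 - j.val = (q - 1 - (j.val+1)) + 1 := by omega
    rw [e]
    exact (hvsucc _).symm.symm
  · have hv0 : ((j.val + 1 : ℕ) : ZMod m).val = 0 := by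
      rw [(by omega : j.val + 1 = m)]
      simp
    rw [hj1, hv0]
    have e1 : q - 1 - j.val = p := by omega
    rw [e1, heq]
    have h4 := hvsucc (q-1)
    rw [(by omega : q - 1 + 1 = q)] at h4
    simpa using h4

lemma ClT_subset_A {G : Fin k → Fin n × Fin n} {T : Finset (Fin k)} {A : Finset (Fin n)}
    (hT : ∀ i ∈ T, (G i).1 ∈ A ∧ (G i).2 ∈ A) {v : Fin n} (hv : v ∈ A) : ClT G T v ⊆ A := by
  intro w hw
  rcases reach_touch (mem_ClT.1 hw) with rfl | ⟨i, hiT, hGi⟩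
  · exact hv
  · rcases hGi with hGi | hGi
    · exact hGi ▸ (hT i hiT).1
    · exact hGi ▸ (hT i hiT).2

lemma ClT_empty (G : Fin k → Fin n × Fin n) (v : Fin n) : ClT G ∅ v = {v} := by
  ext w
  rw [mem_ClT, Finset.mem_singleton]
  constructor
  · intro h
    rcases reach_touch h with rfl | ⟨i, hi, -⟩
    · rfl
    · exact absurd hi (Finset.notMem_empty i)
  · rintro rfl
    exact SimpleGraph.Reachable.refl _

lemma bT_empty (G : Fin k → Fin n × Fin n) : bT G (∅ : Finset (Fin k)) = n := by
  rw [bT_eq]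
  have : Finset.univ.image (ClT G ∅) = Finset.univ.image (fun v : Fin n => ({v} : Finset (Fin n))) := by
    apply Finset.image_congr
    intro v _
    exact ClT_empty G v
  rw [this, Finset.card_image_of_injective _ (fun a b h => Finset.singleton_injective h),
    Finset.card_univ, Fintype.card_fin]

lemma CycIn.mono {G : Fin k → Fin n × Fin n} {S S' : Finset (Fin k)} (h : CycIn G S)
    (hsub : S ⊆ S') : CycIn G S' := by
  obtain ⟨m, hm, c, hc1, hc2⟩ := h
  exact ⟨m, hm, c, hc1, fun j => hsub (hc2 j)⟩

lemma exists_source {G : Fin k → Fin n × Fin n} {A : Finset (Fin n)} (hA : A.Nonempty)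
    {T S : Finset (Fin k)} (hS : S ⊆ T) (hT : ∀ i ∈ T, (G i).1 ∈ A ∧ (G i).2 ∈ A)
    (hacy : ¬ CycIn G S) : ∃ v ∈ A, ∀ i ∈ S, (G i).2 ≠ v := by
  by_contra hcon
  push_neg at hcon
  -- choose for each v ∈ A an edge in S with head v
  have hch : ∀ v : {x // x ∈ A}, ∃ i, i ∈ S ∧ (G i).2 = v.1 := by
    rintro ⟨v, hv⟩
    obtain ⟨i, hiS, hGi⟩ := hcon v hv
    exact ⟨i, hiS, hGi⟩
  choose g hgS hghead using hch
  -- iterate tails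
  let vseq : ℕ → {x // x ∈ A} := fun t => Nat.rec ⟨hA.choose, hA.choose_spec⟩
    (fun _ prev => ⟨(G (g prev)).1, (hT (g prev) (hS (hgS prev))).1⟩) t
  have hvsucc : ∀ t, (vseq (t+1)).1 = (G (g (vseq t))).1 := fun t => rfl
  obtain ⟨p, q, hpq, heq⟩ := Finite.exists_ne_map_eq_of_infinite vseq
  -- wlog p < q
  rcases Nat.lt_or_ge p q with hlt | hge
  · exact hacy (cycle_of_seq g hgS hghead vseq hvsucc p q hlt heq)
  · have hlt : q < p := by omega
    exact hacy (cycle_of_seq g hgS hghead vseq hvsucc q p hlt heq.symm)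

lemma FACT {U V : Finset (Fin k)} (hUV : Disjoint U V) (f g : Finset (Fin k) → ℚ) :
    ∑ S ∈ (U ∪ V).powerset, f (S ∩ U) * g (S ∩ V)
      = (∑ S ∈ U.powerset, f S) * (∑ S ∈ V.powerset, g S) := by
  rw [Finset.sum_mul_sum, ← Finset.sum_product']
  refine Finset.sum_nbij' (fun S => (S ∩ U, S ∩ V)) (fun p => p.1 ∪ p.2) ?_ ?_ ?_ ?_ ?_
  · intro S hS
    rw [Finset.mem_powerset] at hS
    rw [Finset.mem_product, Finset.mem_powerset, Finset.mem_powerset]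
    exact ⟨Finset.inter_subset_right, Finset.inter_subset_right⟩
  · intro p hp
    rw [Finset.mem_product, Finset.mem_powerset, Finset.mem_powerset] at hp
    rw [Finset.mem_powerset]
    exact Finset.union_subset_union hp.1 hp.2
  · intro S hS
    rw [Finset.mem_powerset] at hS
    simp only []
    rw [← Finset.inter_union_distrib_left, Finset.inter_eq_left.2 hS]
  · intro p hp
    rw [Finset.mem_product, Finset.mem_powerset, Finset.mem_powerset] at hp
    have h1 : (p.1 ∪ p.2) ∩ U = p.1 := by
      ext x
      have h1x : x ∈ p.1 → x ∈ U := fun h => hp.1 h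
      have h2x : x ∈ p.2 → x ∉ U := fun h => Finset.disjoint_right.1 hUV (hp.2 h)
      simp only [Finset.mem_inter, Finset.mem_union]
      tauto
    have h2 : (p.1 ∪ p.2) ∩ V = p.2 := by
      ext x
      have h1x : x ∈ p.2 → x ∈ V := fun h => hp.2 h
      have h2x : x ∈ p.1 → x ∉ V := fun h => Finset.disjoint_left.1 hUV (hp.1 h)
      simp only [Finset.mem_inter, Finset.mem_union]
      tauto
    rw [Prod.ext_iff]
    exact ⟨h1, h2⟩
  · intro S hS
    rfl

lemma sum_pow_card_Q {α : Type*} [DecidableEq α] (T : Finset α) :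
    ∑ S ∈ T.powerset, (-1:ℚ)^S.card = if T = ∅ then 1 else 0 := by
  have h := Finset.sum_powerset_neg_one_pow_card (x := T)
  have : ((∑ S ∈ T.powerset, (-1:ℤ)^S.card : ℤ) : ℚ) = ∑ S ∈ T.powerset, (-1:ℚ)^S.card := by
    push_cast
    rfl
  rw [← this, h]
  split <;> norm_num

lemma negpow_mod2 (a b : ℕ) (h : a % 2 = b % 2) : (-1:ℚ)^a = (-1:ℚ)^b := by
  conv_lhs => rw [← Nat.div_add_mod a 2]
  conv_rhs => rw [← Nat.div_add_mod b 2]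
  rw [pow_add, pow_add, pow_mul, pow_mul, h]
  norm_num

lemma COUNT {G : Fin k → Fin n × Fin n} {T : Finset (Fin k)} {W : Finset (Fin n)}
    (hCl : EClosed G T W) :
    bT G (T.filter (fun i => (G i).1 ∉ W ∧ (G i).2 ∉ W)) + (W.image (ClT G T)).card
      = bT G T + W.card := by
  set T₃ := T.filter (fun i => (G i).1 ∉ W ∧ (G i).2 ∉ W) with hT₃
  rw [bT_eq, bT_eq]
  have hsplit : (Finset.univ : Finset (Fin n)) = W ∪ (Finset.univ \ W) := by
    rw [Finset.union_sdiff_of_subset (Finset.subset_univ W)]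
  have himg3 : Finset.univ.image (ClT G T₃)
      = (W.image (fun v => ({v} : Finset (Fin n)))) ∪ ((Finset.univ \ W).image (ClT G T)) := by
    conv_lhs => rw [hsplit]
    rw [Finset.image_union]
    congr 1
    · apply Finset.image_congr
      intro v hv
      ext w
      rw [mem_ClT, Finset.mem_singleton]
      constructor
      · intro h
        exact (reach_in_W_eq hv h).symm
      · rintro rfl
        exact SimpleGraph.Reachable.refl _
    · apply Finset.image_congr
      intro v hv
      have hvW : v ∉ W := (Finset.mem_sdiff.1 hv).2
      ext w
      rw [mem_ClT, mem_ClT]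
      constructor
      · intro h
        exact h.mono (fromRelT_mono (Finset.filter_subset _ _))
      · intro h
        obtain ⟨p⟩ := h
        exact walkT_to_T3 hCl p hvW
  have himgT : Finset.univ.image (ClT G T)
      = (W.image (ClT G T)) ∪ ((Finset.univ \ W).image (ClT G T)) := by
    conv_lhs => rw [hsplit]
    rw [Finset.image_union]
  have hclassW : ∀ w ∈ W, ClT G T w ⊆ W := by
    intro w hw u hu
    exact (closed_reach hCl (mem_ClT.1 hu)).1 hw
  have hd1 : Disjoint (W.image (fun v => ({v} : Finset (Fin n))))
      ((Finset.univ \ W).image (ClT G T)) := by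
    rw [Finset.disjoint_left]
    rintro X hX1 hX2
    obtain ⟨w, hw, rfl⟩ := Finset.mem_image.1 hX1
    obtain ⟨v, hv, hveq⟩ := Finset.mem_image.1 hX2
    have hvW : v ∉ W := (Finset.mem_sdiff.1 hv).2
    have : v ∈ ({w} : Finset (Fin n)) := by rw [← hveq]; exact self_mem_ClT v
    rw [Finset.mem_singleton] at this
    exact hvW (this ▸ hw)
  have hd2 : Disjoint (W.image (ClT G T)) ((Finset.univ \ W).image (ClT G T)) := by
    rw [Finset.disjoint_left]
    rintro X hX1 hX2
    obtain ⟨w, hw, rfl⟩ := Finset.mem_image.1 hX1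
    obtain ⟨v, hv, hveq⟩ := Finset.mem_image.1 hX2
    have hvW : v ∉ W := (Finset.mem_sdiff.1 hv).2
    have : v ∈ ClT G T w := by rw [← hveq]; exact self_mem_ClT v
    exact hvW (hclassW w hw this)
  rw [himg3, himgT, Finset.card_union_of_disjoint hd1, Finset.card_union_of_disjoint hd2,
    Finset.card_image_of_injective _ (fun a b h => Finset.singleton_injective h)]
  omega

lemma closed_of_OC {G : Fin k → Fin n × Fin n} {T : Finset (Fin k)} {W : Finset (Fin n)}
    (hTC : TotCyc G T) (hOC : ∀ i ∈ T, (G i).1 ∈ W → (G i).2 ∈ W) : EClosed G T W := by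
  intro i hi
  refine ⟨hOC i hi, ?_⟩
  intro h2
  obtain ⟨m, hm, c, hwalk, j₀, hj₀⟩ := hTC i hi
  obtain ⟨hw, hmemT⟩ := hwalk
  have hstep : ∀ j, (G (c j)).1 ∈ W → (G (c (j+1))).1 ∈ W := by
    intro j hj
    rw [← hw j]
    exact hOC _ (hmemT j) hj
  have hstart : (G (c (j₀ + 1))).1 ∈ W := by
    rw [← hw j₀, hj₀]
    exact h2
  have hall := walk_all hm (fun j => (G (c j)).1 ∈ W) hstep (j₀+1) hstart
  have h3 : (G (c j₀)).1 ∈ W := hall j₀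
  rwa [hj₀] at h3

lemma TC_T3 {G : Fin k → Fin n × Fin n} {T : Finset (Fin k)} {W : Finset (Fin n)}
    (hTC : TotCyc G T) (hCl : EClosed G T W) :
    TotCyc G (T.filter (fun i => (G i).1 ∉ W ∧ (G i).2 ∉ W)) := by
  intro i hi
  rw [Finset.mem_filter] at hi
  obtain ⟨hiT, h1, h2⟩ := hi
  obtain ⟨m, hm, c, hwalk, j₀, hj₀⟩ := hTC i hiT
  obtain ⟨hw, hmemT⟩ := hwalk
  have hstep : ∀ j, (G (c j)).1 ∉ W → (G (c (j+1))).1 ∉ W := by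
    intro j hj
    have hhead : (G (c j)).2 ∉ W := fun hin => hj ((hCl (c j) (hmemT j)).2 hin)
    rw [← hw j]
    exact hhead
  have hall := walk_all hm (fun j => (G (c j)).1 ∉ W) hstep j₀ (by
    show (G (c j₀)).1 ∉ W
    rw [hj₀]; exact h1)
  have hmem₃ : ∀ j, c j ∈ T.filter (fun i => (G i).1 ∉ W ∧ (G i).2 ∉ W) := by
    intro j
    refine Finset.mem_filter.2 ⟨hmemT j, hall j, ?_⟩
    have h3 : (G (c (j+1))).1 ∉ W := hall (j+1)
    rw [← hw j] at h3
    exact h3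
  exact ⟨m, hm, c, ⟨hw, hmem₃⟩, j₀, hj₀⟩

lemma INNER {G : Fin k → Fin n × Fin n} {A : Finset (Fin n)} {T : Finset (Fin k)}
    {W : Finset (Fin n)}
    (hTA : ∀ i ∈ T, (G i).1 ∈ A ∧ (G i).2 ∈ A) (hTC : TotCyc G T)
    (hWA : W ⊆ A) (hWne : W.Nonempty)
    (IH : ∀ B : Finset (Fin n), B ⊂ A → ∀ T' : Finset (Fin k),
      (∀ i ∈ T', (G i).1 ∈ B ∧ (G i).2 ∈ B) → TotCyc G T' →
      ∑ S ∈ T'.powerset.filter (fun S => ¬ CycIn G S), (-1:ℚ)^S.card = (-1:ℚ)^(n + bT G T')) :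
    ∑ S ∈ (T.powerset.filter (fun S => ¬ CycIn G S)).filter
        (fun S => ∀ i ∈ S, (G i).2 ∉ W), (-1:ℚ)^S.card
    = if T.filter (fun i => (G i).2 ∉ W ∧ (G i).1 ∈ W) = ∅
      then (-1:ℚ)^(n + bT G (T.filter (fun i => (G i).1 ∉ W ∧ (G i).2 ∉ W)))
      else 0 := by
  set T' := T.filter (fun i => (G i).2 ∉ W) with hT'def
  set T₂ := T.filter (fun i => (G i).2 ∉ W ∧ (G i).1 ∈ W) with hT₂def
  set T₃ := T.filter (fun i => (G i).1 ∉ W ∧ (G i).2 ∉ W) with hT₃def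
  have step1 : (T.powerset.filter (fun S => ¬ CycIn G S)).filter
      (fun S => ∀ i ∈ S, (G i).2 ∉ W) = T'.powerset.filter (fun S => ¬ CycIn G S) := by
    ext S
    simp only [Finset.mem_filter, Finset.mem_powerset]
    constructor
    · rintro ⟨⟨hS, hacy⟩, hhead⟩
      exact ⟨fun i hiS => Finset.mem_filter.2 ⟨hS hiS, hhead i hiS⟩, hacy⟩
    · rintro ⟨hS, hacy⟩
      refine ⟨⟨fun i hiS => (Finset.mem_filter.1 (hS hiS)).1, hacy⟩,
        fun i hiS => (Finset.mem_filter.1 (hS hiS)).2⟩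
  have step2 : T' = T₂ ∪ T₃ := by
    ext i
    simp only [hT'def, hT₂def, hT₃def, Finset.mem_filter, Finset.mem_union]
    tauto
  have hdisj : Disjoint T₂ T₃ := by
    rw [Finset.disjoint_left]
    intro i hi1 hi2
    rw [hT₂def, Finset.mem_filter] at hi1
    rw [hT₃def, Finset.mem_filter] at hi2
    exact hi2.2.1 hi1.2.2
  have step3 : ∀ S ⊆ T', (CycIn G S ↔ CycIn G (S ∩ T₃)) := by
    intro S hS
    constructor
    · rintro ⟨m, hm, c, hw, hmem⟩
      refine ⟨m, hm, c, hw, ?_⟩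
      have hheads : ∀ j, (G (c j)).2 ∉ W := fun j =>
        (Finset.mem_filter.1 (hS (hmem j))).2
      have htails : ∀ j, (G (c j)).1 ∉ W := by
        intro j
        have h5 := hw (j - 1)
        rw [sub_add_cancel] at h5
        rw [← h5]
        exact hheads (j - 1)
      intro j
      exact Finset.mem_inter.2 ⟨hmem j,
        Finset.mem_filter.2 ⟨(Finset.mem_filter.1 (hS (hmem j))).1, htails j, hheads j⟩⟩
    · intro h
      exact h.mono Finset.inter_subset_left
  rw [step1, Finset.sum_filter]
  have step4 : ∀ S ∈ T'.powerset,
      (if ¬ CycIn G S then (-1:ℚ)^S.card else 0)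
      = (-1:ℚ)^(S ∩ T₂).card * (if ¬ CycIn G (S ∩ T₃) then (-1:ℚ)^(S ∩ T₃).card else 0) := by
    intro S hS
    rw [Finset.mem_powerset] at hS
    have hcards : S.card = (S ∩ T₂).card + (S ∩ T₃).card := by
      have hu : (S ∩ T₂) ∪ (S ∩ T₃) = S := by
        rw [← Finset.inter_union_distrib_left, ← step2, Finset.inter_eq_left.2 hS]
      conv_lhs => rw [← hu]
      exact Finset.card_union_of_disjoint
        (hdisj.mono Finset.inter_subset_right Finset.inter_subset_right)
    by_cases hacy : CycIn G (S ∩ T₃)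
    · rw [if_neg (not_not.2 ((step3 S hS).2 hacy)), if_neg (not_not.2 hacy), mul_zero]
    · rw [if_pos (fun h => hacy ((step3 S hS).1 h)), if_pos hacy, hcards, pow_add]
  rw [Finset.sum_congr rfl step4]
  have step5 := FACT hdisj (fun X => (-1:ℚ)^X.card)
    (fun X => if ¬ CycIn G X then (-1:ℚ)^X.card else 0)
  rw [step2] at *
  rw [step5, sum_pow_card_Q]
  by_cases hT₂ : T₂ = ∅
  · rw [if_pos hT₂, if_pos hT₂, one_mul]
    have hOC : ∀ i ∈ T, (G i).1 ∈ W → (G i).2 ∈ W := by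
      intro i hi h1
      by_contra h2
      have : i ∈ T₂ := by
        rw [hT₂def, Finset.mem_filter]
        exact ⟨hi, h2, h1⟩
      rw [hT₂] at this
      exact Finset.notMem_empty i this
    have hCl : EClosed G T W := closed_of_OC hTC hOC
    have hssub : A \ W ⊂ A := Finset.sdiff_ssubset hWA hWne
    have hT₃A : ∀ i ∈ T₃, (G i).1 ∈ A \ W ∧ (G i).2 ∈ A \ W := by
      intro i hi
      rw [hT₃def, Finset.mem_filter] at hi
      exact ⟨Finset.mem_sdiff.2 ⟨(hTA i hi.1).1, hi.2.1⟩,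
        Finset.mem_sdiff.2 ⟨(hTA i hi.1).2, hi.2.2⟩⟩
    have hT₃TC : TotCyc G T₃ := TC_T3 hTC hCl
    have := IH (A \ W) hssub T₃ hT₃A hT₃TC
    rw [Finset.sum_filter] at this
    rw [this]
  · rw [if_neg hT₂, if_neg hT₂, zero_mul]

lemma KEY (G : Fin k → Fin n × Fin n) (A : Finset (Fin n)) :
    ∀ T : Finset (Fin k), (∀ i ∈ T, (G i).1 ∈ A ∧ (G i).2 ∈ A) → TotCyc G T →
    ∑ S ∈ T.powerset.filter (fun S => ¬ CycIn G S), (-1:ℚ)^S.card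
      = (-1:ℚ)^(n + bT G T) := by
  induction A using Finset.strongInductionOn with
  | _ A IH =>
  intro T hTA hTC
  by_cases hT0 : T = ∅
  · subst hT0
    have hacy0 : ¬ CycIn G (∅ : Finset (Fin k)) := by
      rintro ⟨m, hm, c, -, hmem⟩
      exact Finset.notMem_empty _ (hmem 0)
    have hfil : (∅ : Finset (Fin k)).powerset.filter (fun S => ¬ CycIn G S) = {∅} := by
      rw [Finset.powerset_empty, Finset.filter_singleton, if_pos hacy0]
    rw [hfil, Finset.sum_singleton, bT_empty, Finset.card_empty, pow_zero]
    rw [← two_mul, pow_mul]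
    norm_num
  · have hTne : T.Nonempty := Finset.nonempty_iff_ne_empty.2 hT0
    obtain ⟨i₀, hi₀⟩ := hTne
    have hA : A.Nonempty := ⟨(G i₀).1, (hTA i₀ hi₀).1⟩
    set P := T.powerset.filter (fun S => ¬ CycIn G S) with hPdef
    set 𝒲 := A.powerset.erase ∅ with hWdef
    -- Step A : the "1 =" trick
    have stepA : ∀ S ∈ P,
        ∑ W ∈ 𝒲.filter (fun W => ∀ i ∈ S, (G i).2 ∉ W), (-1:ℚ)^(W.card+1) = 1 := by
      intro S hS
      rw [hPdef, Finset.mem_filter, Finset.mem_powerset] at hS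
      obtain ⟨hSsub, hSacy⟩ := hS
      obtain ⟨v, hvA, hv⟩ := exists_source hA hSsub hTA hSacy
      set Z := A.filter (fun v => ∀ i ∈ S, (G i).2 ≠ v) with hZdef
      have hZne : Z.Nonempty := ⟨v, Finset.mem_filter.2 ⟨hvA, hv⟩⟩
      have hset : 𝒲.filter (fun W => ∀ i ∈ S, (G i).2 ∉ W) = Z.powerset.erase ∅ := by
        ext W
        simp only [hWdef, hZdef, Finset.mem_filter, Finset.mem_erase, Finset.mem_powerset]
        constructor
        · rintro ⟨⟨hWne, hWA⟩, hWhead⟩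
          refine ⟨hWne, fun w hw => Finset.mem_filter.2 ⟨hWA hw, fun i hiS heq => ?_⟩⟩
          exact hWhead i hiS (heq ▸ hw)
        · rintro ⟨hWne, hWZ⟩
          refine ⟨⟨hWne, fun w hw => (Finset.mem_filter.1 (hWZ hw)).1⟩, ?_⟩
          intro i hiS hin
          exact (Finset.mem_filter.1 (hWZ hin)).2 i hiS rfl
      rw [hset]
      have h1 : ∑ W ∈ Z.powerset, (-1:ℚ)^(W.card+1)
          = -(∑ W ∈ Z.powerset, (-1:ℚ)^W.card) := by
        rw [← Finset.sum_neg_distrib]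
        exact Finset.sum_congr rfl (fun W _ => by ring)
      have h2 : ∑ W ∈ Z.powerset.erase ∅, (-1:ℚ)^(W.card+1)
          = (∑ W ∈ Z.powerset, (-1:ℚ)^(W.card+1)) - (-1:ℚ)^((∅:Finset (Fin n)).card+1) :=
        Finset.sum_erase_eq_sub (Finset.empty_mem_powerset Z)
      rw [h2, h1, sum_pow_card_Q, if_neg (Finset.nonempty_iff_ne_empty.1 hZne)]
      simp
    -- Step B : swap
    have stepB : ∑ S ∈ P, (-1:ℚ)^S.card
        = ∑ W ∈ 𝒲, (-1:ℚ)^(W.card+1) *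
            ∑ S ∈ P.filter (fun S => ∀ i ∈ S, (G i).2 ∉ W), (-1:ℚ)^S.card := by
      calc ∑ S ∈ P, (-1:ℚ)^S.card
          = ∑ S ∈ P, (-1:ℚ)^S.card *
              ∑ W ∈ 𝒲.filter (fun W => ∀ i ∈ S, (G i).2 ∉ W), (-1:ℚ)^(W.card+1) := by
            refine Finset.sum_congr rfl (fun S hS => ?_)
            rw [stepA S hS, mul_one]
        _ = ∑ S ∈ P, ∑ W ∈ 𝒲,
              if (∀ i ∈ S, (G i).2 ∉ W) then (-1:ℚ)^S.card * (-1:ℚ)^(W.card+1) else 0 := by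
            refine Finset.sum_congr rfl (fun S hS => ?_)
            rw [Finset.mul_sum, ← Finset.sum_filter]
        _ = ∑ W ∈ 𝒲, ∑ S ∈ P,
              if (∀ i ∈ S, (G i).2 ∉ W) then (-1:ℚ)^S.card * (-1:ℚ)^(W.card+1) else 0 :=
            Finset.sum_comm
        _ = ∑ W ∈ 𝒲, (-1:ℚ)^(W.card+1) *
              ∑ S ∈ P.filter (fun S => ∀ i ∈ S, (G i).2 ∉ W), (-1:ℚ)^S.card := by
            refine Finset.sum_congr rfl (fun W _ => ?_)
            rw [Finset.mul_sum, ← Finset.sum_filter]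
            refine Finset.sum_congr rfl (fun S _ => ?_)
            ring
    rw [stepB]
    -- evaluate each W-term via INNER
    have stepC : ∀ W ∈ 𝒲, (-1:ℚ)^(W.card+1) *
        (∑ S ∈ P.filter (fun S => ∀ i ∈ S, (G i).2 ∉ W), (-1:ℚ)^S.card)
        = if T.filter (fun i => (G i).2 ∉ W ∧ (G i).1 ∈ W) = ∅
          then (-1:ℚ)^(n + bT G T) * (-1:ℚ)^((W.image (ClT G T)).card + 1)
          else 0 := by
      intro W hW
      rw [hWdef, Finset.mem_erase, Finset.mem_powerset] at hW
      obtain ⟨hWne0, hWA⟩ := hW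
      have hWne : W.Nonempty := Finset.nonempty_iff_ne_empty.2 hWne0
      have hINNER := INNER (W := W) hTA hTC hWA hWne (fun B hB => IH B hB)
      rw [hPdef, hINNER]
      by_cases hT₂ : T.filter (fun i => (G i).2 ∉ W ∧ (G i).1 ∈ W) = ∅
      · rw [if_pos hT₂, if_pos hT₂]
        -- signs via COUNT
        have hOC : ∀ i ∈ T, (G i).1 ∈ W → (G i).2 ∈ W := by
          intro i hi h1
          by_contra h2
          have h3 : i ∈ T.filter (fun i => (G i).2 ∉ W ∧ (G i).1 ∈ W) :=
            Finset.mem_filter.2 ⟨hi, h2, h1⟩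
          rw [hT₂] at h3
          exact Finset.notMem_empty i h3
        have hCl : EClosed G T W := closed_of_OC hTC hOC
        have hcount := COUNT hCl
        rw [← pow_add]
        conv_rhs => rw [← pow_add]
        apply negpow_mod2
        omega
      · rw [if_neg hT₂, if_neg hT₂, mul_zero]
    rw [Finset.sum_congr rfl stepC]
    -- Step D : sum over closed W via bijection with sets of classes
    rw [Finset.sum_ite, Finset.sum_const_zero, add_zero]
    have hfactor : ∀ W ∈ 𝒲.filter (fun W => T.filter (fun i => (G i).2 ∉ W ∧ (G i).1 ∈ W) = ∅),
        (-1:ℚ)^(n + bT G T) * (-1:ℚ)^((W.image (ClT G T)).card + 1)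
        = (-1:ℚ)^(n + bT G T) * (-1:ℚ)^((W.image (ClT G T)).card + 1) := fun _ _ => rfl
    rw [← Finset.mul_sum]
    -- it remains to show the last sum is 1
    have hbij : ∑ W ∈ 𝒲.filter (fun W => T.filter (fun i => (G i).2 ∉ W ∧ (G i).1 ∈ W) = ∅),
        (-1:ℚ)^((W.image (ClT G T)).card + 1)
        = ∑ 𝒮 ∈ (A.image (ClT G T)).powerset.erase ∅, (-1:ℚ)^(𝒮.card + 1) := by
      refine Finset.sum_nbij' (fun W => W.image (ClT G T)) (fun 𝒮 => 𝒮.biUnion id)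
        ?_ ?_ ?_ ?_ ?_
      · intro W hW
        rw [Finset.mem_filter, hWdef, Finset.mem_erase, Finset.mem_powerset] at hW
        obtain ⟨⟨hWne0, hWA⟩, hT₂⟩ := hW
        rw [Finset.mem_erase, Finset.mem_powerset]
        constructor
        · intro hemp
          have hemp' : W.image (ClT G T) = ∅ := hemp
          obtain ⟨w, hw⟩ := Finset.nonempty_iff_ne_empty.2 hWne0
          have : ClT G T w ∈ W.image (ClT G T) := Finset.mem_image_of_mem _ hw
          rw [hemp'] at this
          exact Finset.notMem_empty _ this
        · exact Finset.image_subset_image hWA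
      · intro 𝒮 h𝒮
        rw [Finset.mem_erase, Finset.mem_powerset] at h𝒮
        obtain ⟨h𝒮ne, h𝒮sub⟩ := h𝒮
        rw [Finset.mem_filter, hWdef, Finset.mem_erase, Finset.mem_powerset]
        have hCsub : ∀ C ∈ 𝒮, C ⊆ A := by
          intro C hC
          obtain ⟨v, hvA, rfl⟩ := Finset.mem_image.1 (h𝒮sub hC)
          exact ClT_subset_A hTA hvA
        refine ⟨⟨?_, ?_⟩, ?_⟩
        · -- nonempty
          intro hemp
          have hemp' : 𝒮.biUnion id = ∅ := hemp
          obtain ⟨C, hC⟩ := Finset.nonempty_iff_ne_empty.2 h𝒮ne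
          obtain ⟨v, hvA, hveq⟩ := Finset.mem_image.1 (h𝒮sub hC)
          have hvC : v ∈ C := hveq ▸ self_mem_ClT v
          have : v ∈ 𝒮.biUnion id := Finset.mem_biUnion.2 ⟨C, hC, hvC⟩
          rw [hemp'] at this
          exact Finset.notMem_empty _ this
        · intro x hx
          obtain ⟨C, hC, hxC⟩ := Finset.mem_biUnion.1 hx
          exact hCsub C hC hxC
        · -- out-closedness: filter = ∅
          rw [Finset.filter_eq_empty_iff]
          intro i hi
          rw [not_and_or, not_not]
          by_cases htail : (G i).1 ∈ 𝒮.biUnion id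
          · left
            obtain ⟨C, hC, hxC⟩ := Finset.mem_biUnion.1 htail
            obtain ⟨v, hvA, hveq⟩ := Finset.mem_image.1 (h𝒮sub hC)
            have hreach : (fromRelT G T).Reachable v (G i).1 := by
              rw [← hveq] at hxC
              exact mem_ClT.1 hxC
            have hreach2 : (fromRelT G T).Reachable v (G i).2 :=
              hreach.trans (reach_of_edge hi)
            have : (G i).2 ∈ C := by
              rw [← hveq]
              exact mem_ClT.2 hreach2
            exact Finset.mem_biUnion.2 ⟨C, hC, this⟩
          · right
            exact htail
      · -- left inverse
        intro W hW
        rw [Finset.mem_filter, hWdef, Finset.mem_erase, Finset.mem_powerset] at hW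
        obtain ⟨⟨hWne0, hWA⟩, hT₂⟩ := hW
        have hOC : ∀ i ∈ T, (G i).1 ∈ W → (G i).2 ∈ W := by
          intro i hi h1
          by_contra h2
          have h3 : i ∈ T.filter (fun i => (G i).2 ∉ W ∧ (G i).1 ∈ W) :=
            Finset.mem_filter.2 ⟨hi, h2, h1⟩
          rw [hT₂] at h3
          exact Finset.notMem_empty i h3
        have hCl : EClosed G T W := closed_of_OC hTC hOC
        show (W.image (ClT G T)).biUnion id = W
        ext v
        rw [Finset.mem_biUnion]
        constructor
        · rintro ⟨C, hC, hvC⟩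
          obtain ⟨w, hw, rfl⟩ := Finset.mem_image.1 hC
          exact (closed_reach hCl (mem_ClT.1 hvC)).1 hw
        · intro hv
          exact ⟨ClT G T v, Finset.mem_image_of_mem _ hv, self_mem_ClT v⟩
      · -- right inverse
        intro 𝒮 h𝒮
        rw [Finset.mem_erase, Finset.mem_powerset] at h𝒮
        obtain ⟨h𝒮ne, h𝒮sub⟩ := h𝒮
        show (𝒮.biUnion id).image (ClT G T) = 𝒮
        ext X
        rw [Finset.mem_image]
        constructor
        · rintro ⟨u, hu, rfl⟩
          obtain ⟨C, hC, huC⟩ := Finset.mem_biUnion.1 hu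
          obtain ⟨v, hvA, hveq⟩ := Finset.mem_image.1 (h𝒮sub hC)
          have : ClT G T u = C := by
            rw [← hveq] at huC ⊢
            exact (ClT_eq_of_reachable (mem_ClT.1 huC)).symm
          rw [this]
          exact hC
        · intro hX
          obtain ⟨v, hvA, hveq⟩ := Finset.mem_image.1 (h𝒮sub hX)
          refine ⟨v, ?_, hveq⟩
          refine Finset.mem_biUnion.2 ⟨X, hX, ?_⟩
          rw [← hveq]
          exact self_mem_ClT v
      · intro W _
        rfl
    rw [hbij]
    -- final: sum over nonempty subsets of classes = 1
    have hCAne : (A.image (ClT G T)).Nonempty := hA.image _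
    have h1 : ∑ 𝒮 ∈ (A.image (ClT G T)).powerset, (-1:ℚ)^(𝒮.card+1)
        = -(∑ 𝒮 ∈ (A.image (ClT G T)).powerset, (-1:ℚ)^𝒮.card) := by
      rw [← Finset.sum_neg_distrib]
      exact Finset.sum_congr rfl (fun W _ => by ring)
    have h2 : ∑ 𝒮 ∈ (A.image (ClT G T)).powerset.erase ∅, (-1:ℚ)^(𝒮.card+1)
        = (∑ 𝒮 ∈ (A.image (ClT G T)).powerset, (-1:ℚ)^(𝒮.card+1))
          - (-1:ℚ)^((∅: Finset (Finset (Fin n))).card+1) :=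
      Finset.sum_erase_eq_sub (Finset.empty_mem_powerset _)
    rw [h2, h1, sum_pow_card_Q]
    rw [if_neg (Finset.nonempty_iff_ne_empty.1 hCAne)]
    simp

lemma KEY0 {G : Fin k → Fin n × Fin n} {T : Finset (Fin k)} (hnTC : ¬ TotCyc G T) :
    ∑ S ∈ T.powerset.filter (fun S => ¬ CycIn G S), (-1:ℚ)^S.card = 0 := by
  rw [TotCyc] at hnTC
  push_neg at hnTC
  obtain ⟨e, heT, hec⟩ := hnTC
  have g_mem : ∀ S ∈ T.powerset.filter (fun S => ¬ CycIn G S),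
      (if e ∈ S then S.erase e else insert e S) ∈ T.powerset.filter (fun S => ¬ CycIn G S) := by
    intro S hS
    rw [Finset.mem_filter, Finset.mem_powerset] at hS ⊢
    obtain ⟨hST, hacy⟩ := hS
    by_cases he : e ∈ S
    · rw [if_pos he]
      exact ⟨(Finset.erase_subset e S).trans hST,
        fun hc => hacy (hc.mono (Finset.erase_subset e S))⟩
    · rw [if_neg he]
      refine ⟨Finset.insert_subset heT hST, ?_⟩
      rintro ⟨m, hm, c, hw, hmem⟩
      by_cases hce : ∃ j, c j = e
      · obtain ⟨j₀, hj₀⟩ := hce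
        exact hec ⟨m, hm, c, ⟨hw, fun j => (Finset.insert_subset heT hST) (hmem j)⟩, j₀, hj₀⟩
      · push_neg at hce
        refine hacy ⟨m, hm, c, hw, fun j => ?_⟩
        rcases Finset.mem_insert.1 (hmem j) with h | h
        · exact absurd h (hce j)
        · exact h
  refine Finset.sum_involution (fun S _ => if e ∈ S then S.erase e else insert e S)
    ?_ ?_ g_mem ?_
  · intro S hS
    show (-1:ℚ)^S.card + (-1:ℚ)^(if e ∈ S then S.erase e else insert e S).card = 0
    by_cases he : e ∈ S
    · rw [if_pos he]
      have : S.card = (S.erase e).card + 1 := by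
        rw [Finset.card_erase_of_mem he]
        have : 0 < S.card := Finset.card_pos.2 ⟨e, he⟩
        omega
      rw [this, pow_succ]
      ring
    · rw [if_neg he, Finset.card_insert_of_notMem he, pow_succ]
      ring
  · intro S hS hne
    show (if e ∈ S then S.erase e else insert e S) ≠ S
    by_cases he : e ∈ S
    · rw [if_pos he]
      intro hEq
      rw [← hEq] at he
      exact Finset.notMem_erase e S he
    · rw [if_neg he]
      intro hEq
      exact he (hEq ▸ Finset.mem_insert_self e S)
  · intro S hS
    show (fun S => if e ∈ S then S.erase e else insert e S)
      (if e ∈ S then S.erase e else insert e S) = S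
    by_cases he : e ∈ S
    · rw [if_pos he]
      simp [Finset.notMem_erase, Finset.insert_erase he]
    · rw [if_neg he]
      simp [Finset.mem_insert_self, Finset.erase_insert he]

lemma SUMT (S : Finset (Fin k)) :
    ∑ T ∈ (Finset.univ : Finset (Fin k)).powerset.filter (fun T => S ⊆ T), (-1:ℚ)^T.card
      = (-1:ℚ)^S.card * (if Sᶜ = (∅ : Finset (Fin k)) then 1 else 0) := by
  have hbij : ∑ T ∈ (Finset.univ : Finset (Fin k)).powerset.filter (fun T => S ⊆ T),
      (-1:ℚ)^T.card = ∑ R ∈ Sᶜ.powerset, (-1:ℚ)^S.card * (-1:ℚ)^R.card := by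
    refine Finset.sum_nbij' (fun T => T \ S) (fun R => S ∪ R) ?_ ?_ ?_ ?_ ?_
    · intro T hT
      rw [Finset.mem_filter] at hT
      rw [Finset.mem_powerset]
      intro x hx
      rw [Finset.mem_sdiff] at hx
      rw [Finset.mem_compl]
      exact hx.2
    · intro R hR
      rw [Finset.mem_powerset] at hR
      rw [Finset.mem_filter, Finset.mem_powerset]
      exact ⟨Finset.subset_univ _, Finset.subset_union_left⟩
    · intro T hT
      rw [Finset.mem_filter] at hT
      exact Finset.union_sdiff_of_subset hT.2
    · intro R hR
      rw [Finset.mem_powerset] at hR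
      refine Finset.union_sdiff_cancel_left ?_
      rw [Finset.disjoint_left]
      intro x hxS hxR
      exact (Finset.mem_compl.1 (hR hxR)) hxS
    · intro T hT
      rw [Finset.mem_filter] at hT
      show (-1:ℚ)^T.card = (-1:ℚ)^S.card * (-1:ℚ)^(T \ S).card
      rw [← pow_add]
      congr 1
      have := Finset.card_sdiff_add_card_eq_card hT.2
      omega
  rw [hbij, ← Finset.mul_sum, sum_pow_card_Q]

lemma TotCyclic_loopify {G : Fin k → Fin n × Fin n} (hG : ∀ i, (G i).1 ≠ (G i).2)
    (S : Finset (Fin k)) : TotCyclic n k (loopify G S) ↔ TotCyc G Sᶜ := by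
  constructor
  · intro h i hi
    rw [Finset.mem_compl] at hi
    obtain ⟨m, hm, c, hw, j₀, hj₀⟩ := h i
    obtain ⟨m', hm', c', hw', hmem', j', hj'⟩ := purge hi m hm c hw ⟨j₀, hj₀⟩
    exact ⟨m', hm', c', ⟨hw', fun j => Finset.mem_compl.2 (hmem' j)⟩, j', hj'⟩
  · intro h i
    by_cases hiS : i ∈ S
    · refine ⟨1, one_pos, fun _ => i, fun j => ?_, ⟨0, rfl⟩⟩
      rw [loopify_mem hiS]
    · obtain ⟨m, hm, c, ⟨hw, hmem⟩, j₀, hj₀⟩ := h i (Finset.mem_compl.2 hiS)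
      refine ⟨m, hm, c, fun j => ?_, ⟨j₀, hj₀⟩⟩
      rw [loopify_notMem (Finset.mem_compl.1 (hmem j)),
        loopify_notMem (Finset.mem_compl.1 (hmem (j+1)))]
      exact hw j

lemma beta0_loopify {G : Fin k → Fin n × Fin n} (S : Finset (Fin k)) :
    beta0 n k (loopify G S) = bT G Sᶜ := by
  unfold beta0 bT fromRelT
  congr 2
  ext a b
  rw [SimpleGraph.fromRel_adj, SimpleGraph.fromRel_adj]
  constructor
  · rintro ⟨hab, h⟩
    refine ⟨hab, ?_⟩
    have : ∀ (x y : Fin n), x ≠ y → (∃ i, loopify G S i = (x, y)) →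
        (∃ i ∈ Sᶜ, G i = (x, y)) := by
      rintro x y hxy ⟨i, hi⟩
      by_cases hiS : i ∈ S
      · rw [loopify_mem hiS] at hi
        exfalso
        have h1 : (G i).1 = x := congrArg Prod.fst hi
        have h2 : (G i).1 = y := congrArg Prod.snd hi
        exact hxy (by rw [← h1, ← h2])
      · exact ⟨i, Finset.mem_compl.2 hiS, by rwa [loopify_notMem hiS] at hi⟩
    rcases h with ⟨i, hi | hi⟩ | ⟨i, hi | hi⟩
    · exact Or.inl ((fun ⟨j, hj, he⟩ => ⟨j, hj, Or.inl he⟩) (this a b hab ⟨i, hi⟩))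
    · exact Or.inl ((fun ⟨j, hj, he⟩ => ⟨j, hj, Or.inr he⟩) (this b a (Ne.symm hab) ⟨i, hi⟩))
    · exact Or.inr ((fun ⟨j, hj, he⟩ => ⟨j, hj, Or.inl he⟩) (this b a (Ne.symm hab) ⟨i, hi⟩))
    · exact Or.inr ((fun ⟨j, hj, he⟩ => ⟨j, hj, Or.inr he⟩) (this a b hab ⟨i, hi⟩))
  · rintro ⟨hab, h⟩
    refine ⟨hab, ?_⟩
    rcases h with ⟨i, hic, hi | hi⟩ | ⟨i, hic, hi | hi⟩
    · exact Or.inl ⟨i, Or.inl (by rw [loopify_notMem (Finset.mem_compl.1 hic)]; exact hi)⟩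
    · exact Or.inl ⟨i, Or.inr (by rw [loopify_notMem (Finset.mem_compl.1 hic)]; exact hi)⟩
    · exact Or.inr ⟨i, Or.inl (by rw [loopify_notMem (Finset.mem_compl.1 hic)]; exact hi)⟩
    · exact Or.inr ⟨i, Or.inr (by rw [loopify_notMem (Finset.mem_compl.1 hic)]; exact hi)⟩

lemma SWAP (G : Fin k → Fin n × Fin n) :
    ∑ T ∈ (Finset.univ : Finset (Fin k)).powerset, (-1:ℚ)^T.card *
      ∑ S ∈ T.powerset.filter (fun S => ¬ CycIn G S), (-1:ℚ)^S.card
    = if ¬ CycIn G (Finset.univ : Finset (Fin k)) then 1 else 0 := by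
  have h1 : ∀ T ∈ (Finset.univ : Finset (Fin k)).powerset,
      ∑ S ∈ T.powerset.filter (fun S => ¬ CycIn G S), (-1:ℚ)^S.card
      = ∑ S ∈ (Finset.univ : Finset (Fin k)).powerset.filter (fun S => ¬ CycIn G S),
          (if S ⊆ T then (-1:ℚ)^S.card else 0) := by
    intro T _
    have hcg : ∀ S ∈ T.powerset.filter (fun S => ¬ CycIn G S),
        (-1:ℚ)^S.card = if S ⊆ T then (-1:ℚ)^S.card else 0 := by
      intro S hS
      rw [Finset.mem_filter, Finset.mem_powerset] at hS
      rw [if_pos hS.1]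
    rw [Finset.sum_congr rfl hcg]
    refine Finset.sum_subset ?_ ?_
    · intro S hS
      rw [Finset.mem_filter, Finset.mem_powerset] at hS ⊢
      exact ⟨Finset.subset_univ _, hS.2⟩
    · intro S hS hSn
      rw [Finset.mem_filter, Finset.mem_powerset] at hS hSn
      rw [if_neg]
      intro hsub
      exact hSn ⟨hsub, hS.2⟩
  calc ∑ T ∈ (Finset.univ : Finset (Fin k)).powerset, (-1:ℚ)^T.card *
        ∑ S ∈ T.powerset.filter (fun S => ¬ CycIn G S), (-1:ℚ)^S.card
      = ∑ T ∈ (Finset.univ : Finset (Fin k)).powerset,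
          ∑ S ∈ (Finset.univ : Finset (Fin k)).powerset.filter (fun S => ¬ CycIn G S),
            (if S ⊆ T then (-1:ℚ)^T.card * (-1:ℚ)^S.card else 0) := by
        refine Finset.sum_congr rfl fun T hT => ?_
        rw [h1 T hT, Finset.mul_sum]
        exact Finset.sum_congr rfl fun S _ => by split <;> ring
    _ = ∑ S ∈ (Finset.univ : Finset (Fin k)).powerset.filter (fun S => ¬ CycIn G S),
          ∑ T ∈ (Finset.univ : Finset (Fin k)).powerset,
            (if S ⊆ T then (-1:ℚ)^T.card * (-1:ℚ)^S.card else 0) := Finset.sum_comm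
    _ = ∑ S ∈ (Finset.univ : Finset (Fin k)).powerset.filter (fun S => ¬ CycIn G S),
          (-1:ℚ)^S.card * ∑ T ∈ (Finset.univ : Finset (Fin k)).powerset.filter (fun T => S ⊆ T),
            (-1:ℚ)^T.card := by
        refine Finset.sum_congr rfl fun S _ => ?_
        rw [Finset.mul_sum, ← Finset.sum_filter]
        exact Finset.sum_congr rfl fun T _ => by ring
    _ = ∑ S ∈ (Finset.univ : Finset (Fin k)).powerset.filter (fun S => ¬ CycIn G S),
          (if S = (Finset.univ : Finset (Fin k)) then 1 else 0) := by
        refine Finset.sum_congr rfl fun S _ => ?_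
        rw [SUMT S, ← mul_assoc, ← pow_add]
        have h2 : (-1:ℚ)^(S.card + S.card) = 1 := by
          rw [← two_mul, pow_mul]
          norm_num
        rw [h2, one_mul]
        congr 1
        rw [eq_iff_iff]
        exact ⟨fun h => (Finset.compl_eq_empty_iff S).1 h, fun h => by rw [h]; simp⟩
    _ = if (Finset.univ : Finset (Fin k)) ∈
          (Finset.univ : Finset (Fin k)).powerset.filter (fun S => ¬ CycIn G S)
        then 1 else 0 := by
        rw [Finset.sum_ite_eq' (Finset.univ.powerset.filter (fun S => ¬ CycIn G S))
          (Finset.univ : Finset (Fin k)) (fun _ => (1:ℚ))]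
    _ = if ¬ CycIn G (Finset.univ : Finset (Fin k)) then 1 else 0 := by
        congr 1
        rw [eq_iff_iff, Finset.mem_filter, Finset.mem_powerset]
        exact ⟨fun h => h.2, fun h => ⟨Finset.subset_univ _, h⟩⟩

/-- `Δ det_{n,k} = ((-1)^n/k!) ∑_{G acyclic} G`. -/
theorem stmt17 (n k : ℕ) :
    Delta n k (detnk n k) = fun G =>
      if ¬ HasCycle n k G then (-1 : ℚ) ^ n / k.factorial else 0 := by
  funext G
  rw [Delta_eval]
  by_cases hloop : ∃ i, (G i).1 = (G i).2
  · rw [if_pos hloop]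
    obtain ⟨i, hi⟩ := hloop
    have hcyc : HasCycle n k G := ⟨1, one_pos, fun _ => i, fun _ => hi.symm⟩
    rw [if_neg (fun h => h hcyc)]
  · rw [if_neg hloop]
    push_neg at hloop
    have hdet : ∀ S : Finset (Fin k), detnk n k (loopify G S)
        = if TotCyc G Sᶜ then ((-1:ℚ)^k / k.factorial) * (-1:ℚ)^(bT G Sᶜ) else 0 := by
      intro S
      unfold detnk
      rw [beta0_loopify]
      by_cases h : TotCyc G Sᶜ
      · rw [if_pos ((TotCyclic_loopify hloop S).2 h), if_pos h]
      · rw [if_neg (fun h' => h ((TotCyclic_loopify hloop S).1 h')), if_neg h]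
    have hreind : ∑ S ∈ (Finset.univ : Finset (Fin k)).powerset,
        (-1:ℚ)^S.card * detnk n k (loopify G S)
        = ∑ T ∈ (Finset.univ : Finset (Fin k)).powerset, (-1:ℚ)^(Tᶜ.card) *
            (if TotCyc G T then ((-1:ℚ)^k / k.factorial) * (-1:ℚ)^(bT G T) else 0) := by
      refine Finset.sum_nbij' (fun S => Sᶜ) (fun T => Tᶜ) ?_ ?_ ?_ ?_ ?_
      · intro S _; exact Finset.mem_powerset.2 (Finset.subset_univ _)
      · intro T _; exact Finset.mem_powerset.2 (Finset.subset_univ _)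
      · intro S _; exact compl_compl S
      · intro T _; exact compl_compl T
      · intro S _
        show (-1:ℚ)^S.card * detnk n k (loopify G S)
          = (-1:ℚ)^(Sᶜᶜ.card) * (if TotCyc G Sᶜ then ((-1:ℚ)^k / k.factorial) * (-1:ℚ)^(bT G Sᶜ) else 0)
        rw [hdet S, compl_compl]
    rw [hreind]
    have hterm : ∀ T ∈ (Finset.univ : Finset (Fin k)).powerset,
        (-1:ℚ)^(Tᶜ.card) * (if TotCyc G T then ((-1:ℚ)^k / k.factorial) * (-1:ℚ)^(bT G T) else 0)
        = ((-1:ℚ)^n / k.factorial) * ((-1:ℚ)^(T.card) *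
            ∑ S ∈ T.powerset.filter (fun S => ¬ CycIn G S), (-1:ℚ)^S.card) := by
      intro T _
      by_cases htc : TotCyc G T
      · rw [if_pos htc, KEY G Finset.univ T (fun i _ => ⟨Finset.mem_univ _, Finset.mem_univ _⟩) htc]
        have hc : Tᶜ.card + T.card = k := by
          have := Finset.card_compl (s := T)
          have h2 := Finset.card_le_univ T
          simp only [Fintype.card_fin] at this h2
          omega
        have hpow : (-1:ℚ)^(Tᶜ.card) * ((-1:ℚ)^k * (-1:ℚ)^(bT G T))
            = (-1:ℚ)^n * ((-1:ℚ)^(T.card) * (-1:ℚ)^(n + bT G T)) := by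
          rw [← pow_add, ← pow_add, ← pow_add, ← pow_add]
          exact negpow_mod2 _ _ (by omega)
        calc (-1:ℚ)^(Tᶜ.card) * (((-1:ℚ)^k / k.factorial) * (-1:ℚ)^(bT G T))
            = ((-1:ℚ)^(Tᶜ.card) * ((-1:ℚ)^k * (-1:ℚ)^(bT G T))) / k.factorial := by ring
          _ = ((-1:ℚ)^n * ((-1:ℚ)^(T.card) * (-1:ℚ)^(n + bT G T))) / k.factorial := by rw [hpow]
          _ = ((-1:ℚ)^n / k.factorial) * ((-1:ℚ)^(T.card) * (-1:ℚ)^(n + bT G T)) := by ring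
      · rw [if_neg htc, KEY0 htc]
        ring
    rw [Finset.sum_congr rfl hterm, ← Finset.mul_sum, SWAP]
    have hHC : HasCycle n k G ↔ CycIn G (Finset.univ : Finset (Fin k)) := by
      constructor
      · rintro ⟨m, hm, c, hw⟩
        exact ⟨m, hm, c, hw, fun j => Finset.mem_univ _⟩
      · rintro ⟨m, hm, c, hw, -⟩
        exact ⟨m, hm, c, hw⟩
    by_cases hhc : HasCycle n k G
    · rw [if_neg (fun h => h (hHC.1 hhc)), if_neg (fun h => h hhc), mul_zero]
    · rw [if_pos (fun h => hhc (hHC.2 h)), if_pos hhc, mul_one]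
end
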